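/- Each of the communication models bag, p2p, causal, and synch is RegSC: for each such model Com there exists an NFA over actions accepting exactly the set {e ∈ Exec(RSC) | msc(e) ∈ MSC(Com)} of RSC executions whose MSC is linearisable in Com. -/

import Mathlib

/-! ## Common definitions: actions, executions, MSCs, communication models,
communicating finite state machines, and global types. -/

/-- Actions: a send `p▷q!m` or a receive `p▷q?m`. -/
inductive Act (P M : Type) : Type where
  | snd (p q : P) (m : M)
  | rcv (p q : P) (m : M)
deriving DecidableEq

namespace Act
variable {P M : Type}

/-- The process executing an action: a send belongs to the sender,
a receive belongs to the receiver. -/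
def proc : Act P M → P
  | .snd p _ _ => p
  | .rcv _ q _ => q

end Act

/-- Raw executions: a word of actions together with a source function on positions. -/
structure Exec (P M : Type) : Type where
  w : List (Act P M)
  src : ℕ → ℕ

namespace Exec
variable {P M : Type}

def act? (e : Exec P M) (i : ℕ) : Option (Act P M) := e.w[i]?

def IsSend (e : Exec P M) (i : ℕ) : Prop := ∃ p q m, e.act? i = some (.snd p q m)

def IsRecv (e : Exec P M) (i : ℕ) : Prop := ∃ p q m, e.act? i = some (.rcv p q m)

/-- Well-formedness of an execution: each receive event `r` labelled `p▷q?m` has a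
source send event `src r < r` labelled `p▷q!m`, and `src` is injective on receive events. -/
def WF (e : Exec P M) : Prop :=
  (∀ i p q m, e.act? i = some (.rcv p q m) →
    e.src i < i ∧ e.act? (e.src i) = some (.snd p q m)) ∧
  (∀ i j, e.IsRecv i → e.IsRecv j → e.src i = e.src j → i = j)

/-- A send event is matched if it is the source of some receive event. -/
def Matched (e : Exec P M) (s : ℕ) : Prop := ∃ r, e.IsRecv r ∧ e.src r = s

def OrphanFree (e : Exec P M) : Prop := ∀ s, e.IsSend s → e.Matched s

/-- Prefix of executions: the word is a prefix and the source functions agree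
on the receive events of the shorter one. -/
def IsPrefix (e₁ e₂ : Exec P M) : Prop :=
  e₁.w <+: e₂.w ∧ ∀ i, e₁.IsRecv i → e₁.src i = e₂.src i

/-- Projection of an execution onto the actions of a process. -/
def proj (e : Exec P M) [DecidableEq P] (p : P) : List (Act P M) :=
  e.w.filter (fun a => decide (a.proc = p))

/-- The MSC event `(process, index within the process)` at a position of the word. -/
def evOf (e : Exec P M) [DecidableEq P] (i : ℕ) : Option (P × ℕ) :=
  (e.act? i).map
    (fun a => (a.proc, ((e.w.take i).filter (fun b => decide (b.proc = a.proc))).length))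

/-- The position in the word of the `i`-th event of process `p`. -/
def posOf (e : Exec P M) [DecidableEq P] (ev : P × ℕ) : ℕ :=
  ((List.range e.w.length).filter
    (fun k => decide ((e.act? k).map Act.proc = some ev.1))).getD ev.2 0

end Exec

/-- Raw MSCs: a word of actions per process, and a source function on events. -/
structure MSC (P M : Type) : Type where
  w : P → List (Act P M)
  src : P × ℕ → P × ℕ

namespace MSC
variable {P M : Type}

def act? (Mm : MSC P M) (ev : P × ℕ) : Option (Act P M) := (Mm.w ev.1)[ev.2]?

def IsSend (Mm : MSC P M) (ev : P × ℕ) : Prop := ∃ p q m, Mm.act? ev = some (.snd p q m)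

def IsRecv (Mm : MSC P M) (ev : P × ℕ) : Prop := ∃ p q m, Mm.act? ev = some (.rcv p q m)

/-- Well-formedness of an MSC. -/
def WF (Mm : MSC P M) : Prop :=
  (∀ p, ∀ a ∈ Mm.w p, a.proc = p) ∧
  (∀ ev p q m, Mm.act? ev = some (.rcv p q m) → Mm.act? (Mm.src ev) = some (.snd p q m)) ∧
  (∀ ev ev', Mm.IsRecv ev → Mm.IsRecv ev' → Mm.src ev = Mm.src ev' → ev = ev')

/-- Basic happens-before steps: process order and message order. -/
inductive hbBase (Mm : MSC P M) : P × ℕ → P × ℕ → Prop where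
  | proc (p : P) (i j : ℕ) : i < j → j < (Mm.w p).length → hbBase Mm (p, i) (p, j)
  | msg (ev : P × ℕ) : Mm.IsRecv ev → hbBase Mm (Mm.src ev) ev

/-- The happens-before relation: least transitive relation containing the basic steps. -/
def hb (Mm : MSC P M) : P × ℕ → P × ℕ → Prop := Relation.TransGen (hbBase Mm)

/-- Prefix of MSCs. -/
def IsPrefix (M₁ M₂ : MSC P M) : Prop :=
  (∀ p, M₁.w p <+: M₂.w p) ∧ ∀ ev, M₁.IsRecv ev → M₁.src ev = M₂.src ev

end MSC

/-- Prefix closure of a set of MSCs. -/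
def prefSet {P M : Type} (X : Set (MSC P M)) : Set (MSC P M) :=
  {Mm | ∃ M' ∈ X, Mm.IsPrefix M'}

/-- The MSC of an execution: project onto each process and lift the source function. -/
def Exec.toMSC {P M : Type} [DecidableEq P] (e : Exec P M) : MSC P M where
  w p := e.w.filter (fun a => decide (a.proc = p))
  src ev := (e.evOf (e.src (e.posOf ev))).getD ev

/-- The linearisations of an MSC, identified with the executions they induce. -/
def lin {P M : Type} [DecidableEq P] (Mm : MSC P M) : Set (Exec P M) :=
  {e | e.WF ∧ e.toMSC = Mm}

/-- The linearisations of an MSC lying in a communication model. -/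
def linC {P M : Type} [DecidableEq P] (Com : Set (Exec P M)) (Mm : MSC P M) :
    Set (Exec P M) :=
  lin Mm ∩ Com

/-- A communication model (a set of executions) is causally closed if whenever an MSC
has a linearisation in the model, all its linearisations are in the model. -/
def CausallyClosed {P M : Type} [DecidableEq P] (Com : Set (Exec P M)) : Prop :=
  ∀ Mm : MSC P M, (linC Com Mm).Nonempty → linC Com Mm = lin Mm

/-- The MSCs linearisable in a communication model. -/
def MSCModel {P M : Type} [DecidableEq P] (Com : Set (Exec P M)) : Set (MSC P M) :=
  {Mm | (linC Com Mm).Nonempty}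

/-- The bag communication model: all executions. -/
def bag {P M : Type} : Set (Exec P M) := {e | e.WF}

/-- The synchronous communication model: every send is immediately followed by
its matching receive. -/
def synch {P M : Type} : Set (Exec P M) :=
  {e | e.WF ∧ ∀ s, e.IsSend s → e.IsRecv (s + 1) ∧ e.src (s + 1) = s}

/-- The peer-to-peer communication model. -/
def p2p {P M : Type} : Set (Exec P M) :=
  {e | e.WF ∧ ∀ s₁ s₂ p q m₁ m₂,
    e.act? s₁ = some (.snd p q m₁) → e.act? s₂ = some (.snd p q m₂) → s₁ < s₂ →
    (¬ e.Matched s₂ ∨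
      ∃ r₁ r₂, r₁ < r₂ ∧ e.IsRecv r₁ ∧ e.IsRecv r₂ ∧ e.src r₁ = s₁ ∧ e.src r₂ = s₂)}

/-- Happens-before between positions of an execution, through its MSC. -/
def Exec.hbM {P M : Type} [DecidableEq P] (e : Exec P M) (i j : ℕ) : Prop :=
  ∃ ev₁ ev₂, e.evOf i = some ev₁ ∧ e.evOf j = some ev₂ ∧ e.toMSC.hb ev₁ ev₂

/-- The causally ordered communication model. -/
def causal {P M : Type} [DecidableEq P] : Set (Exec P M) :=
  {e | e.WF ∧ ∀ s₁ s₂ p₁ p₂ q m₁ m₂,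
    e.act? s₁ = some (.snd p₁ q m₁) → e.act? s₂ = some (.snd p₂ q m₂) → e.hbM s₁ s₂ →
    (¬ e.Matched s₂ ∨
      ∃ r₁ r₂, e.hbM r₁ r₂ ∧ e.IsRecv r₁ ∧ e.IsRecv r₂ ∧ e.src r₁ = s₁ ∧ e.src r₂ = s₂)}

/-- A communicating finite state machine: an NFA with ε-transitions
(over the actions of a process) with finitely many states. -/
structure CFSM (A : Type) : Type 1 where
  State : Type
  fin : Fintype State
  aut : εNFA A State

instance {A : Type} (c : CFSM A) : Fintype c.State := c.fin

/-- The machine obtained by making all states accepting. -/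
def CFSM.up {A : Type} (c : CFSM A) : CFSM A :=
  ⟨c.State, c.fin, { c.aut with accept := Set.univ }⟩

/-- Making all states of all machines of a system accepting. -/
def sysUp {P M : Type} (S : P → CFSM (Act P M)) : P → CFSM (Act P M) :=
  fun p => (S p).up

/-- `Exec(S, Com)`: the executions of a system of CFSMs in a communication model. -/
def ExecSys {P M : Type} [DecidableEq P] (S : P → CFSM (Act P M)) (Com : Set (Exec P M)) :
    Set (Exec P M) :=
  {e | e ∈ Com ∧ ∀ p, e.proj p ∈ (S p).aut.accepts}

/-- `MSC(S, Com)`: the MSCs of the executions of a system of CFSMs. -/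
def MSCSys {P M : Type} [DecidableEq P] (S : P → CFSM (Act P M)) (Com : Set (Exec P M)) :
    Set (MSC P M) :=
  Exec.toMSC '' ExecSys S Com

/-- A system is deadlock-free for `Com` if every execution of the system with all states
accepting is a prefix of an accepting execution of the system. -/
def DeadlockFree {P M : Type} [DecidableEq P] (S : P → CFSM (Act P M))
    (Com : Set (Exec P M)) : Prop :=
  ∀ e ∈ ExecSys (sysUp S) Com, ∃ e' ∈ ExecSys S Com, e.IsPrefix e'

/-- A system is orphan-free for `Com` if all its executions are orphan-free. -/
def SysOrphanFree {P M : Type} [DecidableEq P] (S : P → CFSM (Act P M))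
    (Com : Set (Exec P M)) : Prop :=
  ∀ e ∈ ExecSys S Com, e.OrphanFree

/-- An arrow `p→q:m` with `p ≠ q`. -/
def Arrow (P M : Type) : Type := {x : P × P × M // x.1 ≠ x.2.1}

namespace Arrow
variable {P M : Type}

def sender (a : Arrow P M) : P := a.1.1
def receiver (a : Arrow P M) : P := a.1.2.1
def msg (a : Arrow P M) : M := a.1.2.2
def sendAct (a : Arrow P M) : Act P M := .snd a.sender a.receiver a.msg
def recvAct (a : Arrow P M) : Act P M := .rcv a.sender a.receiver a.msg

/-- Two arrows commute when their pairs of processes are disjoint. -/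
def Commutes (a b : Arrow P M) : Prop :=
  a.sender ≠ b.sender ∧ a.sender ≠ b.receiver ∧
    a.receiver ≠ b.sender ∧ a.receiver ≠ b.receiver

instance [DecidableEq P] [Fintype P] [Fintype M] : Fintype (Arrow P M) :=
  Subtype.fintype _

end Arrow

/-- A global type: a deterministic finite (possibly partial) automaton over arrows. -/
structure GType (P M : Type) : Type 1 where
  State : Type
  fin : Fintype State
  step : State → Arrow P M → Option State
  start : State
  accept : Set State

instance {P M : Type} (G : GType P M) : Fintype G.State := G.fin

namespace GType
variable {P M : Type}

def evalFrom (G : GType P M) (s : Option G.State) (w : List (Arrow P M)) : Option G.State :=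
  w.foldl (fun s a => s.bind (fun q => G.step q a)) s

/-- The word language of a global type. -/
def lang (G : GType P M) : Set (List (Arrow P M)) :=
  {w | ∃ s, G.evalFrom (some G.start) w = some s ∧ s ∈ G.accept}

/-- The arrows labelling the outgoing transitions of a state. -/
def choices (G : GType P M) (s : G.State) : Set (Arrow P M) := {a | (G.step s a).isSome}

/-- Commutation-determinism: no two arrows available at a same state commute. -/
def CommDet (G : GType P M) : Prop :=
  ∀ s : G.State, ∀ a ∈ G.choices s, ∀ b ∈ G.choices s, ¬ a.Commutes b

/-- Sender-driven choice: all arrows available at a same state have the same sender. -/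
def SenderDriven (G : GType P M) : Prop :=
  ∀ s : G.State, ∀ a ∈ G.choices s, ∀ b ∈ G.choices s, a.sender = b.sender

end GType

/-- The synchronous execution coded by a sequence of arrows. -/
def execOfArrows {P M : Type} (w : List (Arrow P M)) : Exec P M where
  w := (w.map (fun a => [a.sendAct, a.recvAct])).flatten
  src := fun i => i - 1

/-- The MSC coded by a sequence of arrows. -/
def mscOfArrows {P M : Type} [DecidableEq P] (w : List (Arrow P M)) : MSC P M :=
  (execOfArrows w).toMSC

/-- The set of MSCs of sequences of arrows (MSCs linearisable in the synchronous model). -/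
def MSCsynch (P M : Type) [DecidableEq P] : Set (MSC P M) :=
  Set.range (mscOfArrows (P := P) (M := M))

/-- The existential MSC language of a global type. -/
def Lexists {P M : Type} [DecidableEq P] (G : GType P M) : Set (MSC P M) :=
  mscOfArrows '' G.lang

/-- The universal MSC language of a global type. -/
def Lforall {P M : Type} [DecidableEq P] (G : GType P M) : Set (MSC P M) :=
  {Mm | (∃ w, mscOfArrows w = Mm) ∧ ∀ w, mscOfArrows w = Mm → w ∈ G.lang}

/-- A global type is commutation-closed when its existential and universal MSC
languages coincide. -/
def GType.CommClosed {P M : Type} [DecidableEq P] (G : GType P M) : Prop :=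
  Lexists G = Lforall G

/-- The relabelling of an arrow for the projection onto process `p`. -/
def projLabel {P M : Type} [DecidableEq P] (p : P) (a : Arrow P M) : Option (Act P M) :=
  if a.sender = p then some a.sendAct
  else if a.receiver = p then some a.recvAct
  else none

/-- The projected system of CFSMs of a global type. -/
def projG {P M : Type} [DecidableEq P] (G : GType P M) : P → CFSM (Act P M) :=
  fun p =>
    ⟨G.State, G.fin,
      { step := fun s oa =>
          {s' | ∃ arr : Arrow P M, G.step s arr = some s' ∧ projLabel p arr = oa},
        start := {G.start},
        accept := G.accept }⟩

/-- `Exec(G, Com)`: the semantics of a global type in a communication model. -/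
def ExecG {P M : Type} [DecidableEq P] (G : GType P M) (Com : Set (Exec P M)) :
    Set (Exec P M) :=
  {e | ∃ Mm ∈ Lexists G, e ∈ linC Com Mm}

/-- Deadlock-free realisability of a global type in a communication model:
(CC) conformance and (DF) deadlock freedom of the projected system. -/
def DFRealisable {P M : Type} [DecidableEq P] (G : GType P M) (Com : Set (Exec P M)) : Prop :=
  ExecSys (projG G) Com = ExecG G Com ∧ DeadlockFree (projG G) Com

/-- The synchronous product of a system of CFSMs: an ε-NFA over arrows. -/
def syncProd {P M : Type} (S : P → CFSM (Act P M)) :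
    εNFA (Arrow P M) (∀ p, (S p).State) where
  step st oa :=
    match oa with
    | some a =>
        {st' | st' a.sender ∈ (S a.sender).aut.step (st a.sender) (some a.sendAct) ∧
               st' a.receiver ∈ (S a.receiver).aut.step (st a.receiver) (some a.recvAct) ∧
               ∀ r, r ≠ a.sender → r ≠ a.receiver → st' r = st r}
    | none =>
        {st' | ∃ p, st' p ∈ (S p).aut.step (st p) none ∧ ∀ r, r ≠ p → st' r = st r}
  start := {st | ∀ p, st p ∈ (S p).aut.start}
  accept := {st | ∀ p, st p ∈ (S p).aut.accept}

/-- `prod(S)`: the powerset determinisation of the synchronous product, a global type. -/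
noncomputable def prodG {P M : Type} [Fintype P] (S : P → CFSM (Act P M)) : GType P M :=
  let A := (syncProd S).toNFA.toDFA
  { State := Set (∀ p, (S p).State)
    fin := by
      haveI : Finite (∀ p, (S p).State) := inferInstance
      exact Fintype.ofFinite _
    step := fun s a => some (A.step s a)
    start := A.start
    accept := A.accept }

/-- The product `G₁ ⊗ G₂` of two global types (language intersection). -/
def prodGT {P M : Type} (G₁ G₂ : GType P M) : GType P M where
  State := G₁.State × G₂.State
  fin := inferInstance
  step s a := (G₁.step s.1 a).bind fun q₁ => (G₂.step s.2 a).map fun q₂ => (q₁, q₂)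
  start := (G₁.start, G₂.start)
  accept := {s | s.1 ∈ G₁.accept ∧ s.2 ∈ G₂.accept}

/-- The dual of a global type: complete it and swap accepting and non-accepting states. -/
def dualG {P M : Type} (G : GType P M) : GType P M where
  State := Option G.State
  fin := inferInstance
  step s a := some (s.bind fun q => G.step q a)
  start := some G.start
  accept := {s | ∀ q, s = some q → q ∉ G.accept}

/-- RSC executions: every receive immediately follows its source send. -/
def RSCexec {P M : Type} : Set (Exec P M) :=
  {e | e.WF ∧ ∀ r, e.IsRecv r → e.src r = r - 1}

/-- The MSCs admitting an RSC linearisation. -/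
def MSCrsc {P M : Type} [DecidableEq P] : Set (MSC P M) :=
  {Mm | ∃ e ∈ RSCexec (P := P) (M := M), e.toMSC = Mm}

/-- A set of MSCs is RegSC if some NFA over actions accepts exactly the RSC executions
whose MSC belongs to the set. -/
def RegSCset {P M : Type} [DecidableEq P] (X : Set (MSC P M)) : Prop :=
  ∃ (σ : Type) (_ : Fintype σ) (A : NFA (Act P M) σ),
    ∀ w : List (Act P M),
      w ∈ A.accepts ↔ ∃ e ∈ RSCexec (P := P) (M := M), e.w = w ∧ e.toMSC ∈ X

/-- A communication model is RegSC if the set of its RSC-linearisable MSCs is RegSC. -/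
def RegSCmodel {P M : Type} [DecidableEq P] (Com : Set (Exec P M)) : Prop :=
  RegSCset (MSCModel Com ∩ MSCrsc)

set_option linter.unusedSectionVars false
namespace S17
open List

variable {P M : Type} [DecidableEq P]

/-! ### word-level basics -/

theorem act?_lt {α : Type*} {w : List α} {i : ℕ} {a : α} (h : w[i]? = some a) :
    i < w.length := (List.getElem?_eq_some_iff.1 h).1

theorem getElem?_append_lt {α : Type*} {w : List α} (v : List α) {i : ℕ} (h : i < w.length) :
    (w ++ v)[i]? = w[i]? := by
  rw [List.getElem?_append]; simp [h]

/-- canonical position-filter lemma -/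
theorem filter_range_get (pred : ℕ → Bool) {n i : ℕ} (hi : i < n) (hp : pred i = true) :
    ((List.range n).filter pred)[((List.range i).filter pred).length]? = some i := by
  have hn : n = (i + 1) + (n - (i + 1)) := by omega
  rw [hn, List.range_add, List.filter_append, List.range_succ, List.filter_append]
  have : List.filter pred [i] = [i] := by simp [hp]
  rw [this, List.append_assoc]
  rw [List.getElem?_append_right (le_refl _)]
  simp

theorem cnt_lemma (w : List (Act P M)) (p : P) :
    ∀ i, i ≤ w.length →
      ((List.range i).filter (fun k => decide ((w[k]?).map Act.proc = some p))).length
        = ((w.take i).filter (fun b => decide (b.proc = p))).length := by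
  intro i
  induction i with
  | zero => simp
  | succ i ih =>
    intro hle
    have hi : i < w.length := by omega
    have hw : w[i]? = some w[i] := List.getElem?_eq_getElem hi
    rw [List.range_succ, List.filter_append, List.length_append,
      ih (by omega), List.take_succ, List.filter_append, List.length_append, hw]
    by_cases h : (w[i]).proc = p <;> simp [List.filter_singleton, hw, h]

/-! ### evOf / posOf machinery -/

theorem evOf_eq (e : Exec P M) {i : ℕ} {a : Act P M} (h : e.act? i = some a) :
    e.evOf i
      = some (a.proc, ((e.w.take i).filter (fun b => decide (b.proc = a.proc))).length) := by
  simp [Exec.evOf, h]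

theorem toMSC_w (e : Exec P M) (p : P) :
    e.toMSC.w p = e.w.filter (fun b => decide (b.proc = p)) := rfl

theorem toMSC_act (e : Exec P M) {i : ℕ} {a : Act P M} (h : e.act? i = some a) :
    e.toMSC.act?
      (a.proc, ((e.w.take i).filter (fun b => decide (b.proc = a.proc))).length) = some a := by
  have hi : i < e.w.length := act?_lt h
  have hgi : e.w[i] = a := (List.getElem?_eq_some_iff.1 h).2
  have hpa : List.filter (fun b => decide (b.proc = a.proc)) (a :: e.w.drop (i + 1))
      = a :: List.filter (fun b => decide (b.proc = a.proc)) (e.w.drop (i + 1)) := by simp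
  have hsplit : e.w.filter (fun b => decide (b.proc = a.proc))
      = (e.w.take i).filter (fun b => decide (b.proc = a.proc))
        ++ a :: (e.w.drop (i + 1)).filter (fun b => decide (b.proc = a.proc)) := by
    conv_lhs => rw [← List.take_append_drop i e.w, List.drop_eq_getElem_cons hi, hgi]
    rw [List.filter_append, hpa]
  show (e.w.filter (fun b => decide (b.proc = a.proc)))[
      ((e.w.take i).filter (fun b => decide (b.proc = a.proc))).length]? = some a
  rw [hsplit, List.getElem?_append_right (le_refl _)]
  simp

theorem posOf_evOf (e : Exec P M) {i : ℕ} {a : Act P M} (h : e.act? i = some a) :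
    e.posOf (a.proc, ((e.w.take i).filter (fun b => decide (b.proc = a.proc))).length) = i := by
  have hi : i < e.w.length := act?_lt h
  unfold Exec.posOf
  rw [List.getD_eq_getElem?_getD]
  have hp : (fun k => decide ((e.act? k).map Act.proc = some a.proc)) i = true := by
    simp [h]
  have hcnt := cnt_lemma e.w a.proc i (le_of_lt hi)
  simp only [Exec.act?] at hp hcnt ⊢
  rw [show ((e.w.take i).filter (fun b => decide (b.proc = a.proc))).length
      = ((List.range i).filter (fun k => decide ((e.w[k]?).map Act.proc = some a.proc))).length
      from hcnt.symm]
  erw [filter_range_get _ hi hp]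
  rfl

theorem evOf_spec (e : Exec P M) {i : ℕ} {ev : P × ℕ} (h : e.evOf i = some ev) :
    ∃ a, e.act? i = some a
      ∧ ev = (a.proc, ((e.w.take i).filter (fun b => decide (b.proc = a.proc))).length)
      ∧ e.toMSC.act? ev = some a ∧ e.posOf ev = i := by
  rcases Option.map_eq_some_iff.1 h with ⟨a, ha, hev⟩
  exact ⟨a, ha, hev.symm, by rw [← hev]; exact toMSC_act e ha, by rw [← hev]; exact posOf_evOf e ha⟩

theorem evOf_inj (e : Exec P M) {i j : ℕ} {ev : P × ℕ} (hi : e.evOf i = some ev)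
    (hj : e.evOf j = some ev) : i = j := by
  obtain ⟨a, _, _, _, hp⟩ := evOf_spec e hi
  obtain ⟨b, _, _, _, hq⟩ := evOf_spec e hj
  rw [← hp, hq]

theorem evOf_surj (e : Exec P M) {ev : P × ℕ} {a : Act P M} (h : e.toMSC.act? ev = some a) :
    ∃ i, e.act? i = some a ∧ e.evOf i = some ev := by
  obtain ⟨p, k⟩ := ev
  have hk : k < (e.w.filter (fun b => decide (b.proc = p))).length := by
    have := act?_lt (w := e.toMSC.w p) (i := k) (by exact h)
    simpa [toMSC_w] using this
  set pred : ℕ → Bool := fun k' => decide ((e.w[k']?).map Act.proc = some p) with hpreddef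
  set L := (List.range e.w.length).filter pred with hLdef
  have hlen : L.length = (e.w.filter (fun b => decide (b.proc = p))).length := by
    have h0 := cnt_lemma e.w p e.w.length (le_refl _)
    rw [List.take_length] at h0
    exact h0
  have hik : k < L.length := by omega
  set i := L[k] with hidef
  have hmem : i ∈ L := List.getElem_mem hik
  rw [hLdef, List.mem_filter] at hmem
  obtain ⟨hir, hpi⟩ := hmem
  have hilt : i < e.w.length := List.mem_range.1 hir
  rw [hpreddef] at hpi
  simp only [decide_eq_true_eq] at hpi
  obtain ⟨a', ha', hproc⟩ := Option.map_eq_some_iff.1 hpi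
  have hact : e.act? i = some a' := ha'
  have hcnt : ((List.range i).filter pred).length
      = ((e.w.take i).filter (fun b => decide (b.proc = p))).length := by
    rw [hpreddef]; exact cnt_lemma e.w p i (le_of_lt hilt)
  have hLc : L[((e.w.take i).filter (fun b => decide (b.proc = p))).length]? = some i := by
    rw [hLdef, ← hcnt]
    exact filter_range_get pred hilt (by rw [hpreddef]; simp [ha', hproc])
  obtain ⟨hclt, hLcval⟩ := List.getElem?_eq_some_iff.1 hLc
  have hnd : L.Nodup := List.Nodup.filter _ List.nodup_range
  have hkc : ((e.w.take i).filter (fun b => decide (b.proc = p))).length = k := by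
    have : L[((e.w.take i).filter (fun b => decide (b.proc = p))).length] = L[k] := by
      rw [hLcval, hidef]
    exact (List.Nodup.getElem_inj_iff hnd).1 this
  have hev : e.evOf i = some (p, k) := by
    rw [evOf_eq e hact, hproc, hkc]
  have hta := toMSC_act e hact
  rw [hproc, hkc] at hta
  have : a' = a := by
    have := hta.symm.trans h
    exact Option.some_injective _ this
  exact ⟨i, by rw [hact, this], hev⟩

/-! ### order, src, matched -/

theorem filter_take_mono (w : List (Act P M)) (f : Act P M → Bool) {i j : ℕ} (hij : i ≤ j) :
    ((w.take i).filter f).length ≤ ((w.take j).filter f).length := by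
  have hpre : w.take i <+: w.take j := by
    have : (w.take j).take i = w.take i := by
      rw [List.take_take]; congr 1; omega
    rw [← this]; exact List.take_prefix _ _
  exact List.Sublist.length_le (List.Sublist.filter f hpre.sublist)

theorem evOf_lt_of_lt (e : Exec P M) {i j : ℕ} {p : P} {ki kj : ℕ}
    (hi : e.evOf i = some (p, ki)) (hj : e.evOf j = some (p, kj)) (hij : i < j) : ki < kj := by
  obtain ⟨a, ha, hev, -, -⟩ := evOf_spec e hi
  obtain ⟨b, hb, hev', -, -⟩ := evOf_spec e hj
  have hap : a.proc = p := (Prod.mk.injEq _ _ _ _ ▸ hev).1.symm ▸ rfl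
  have hap : a.proc = p := by cases hev; rfl
  have hbp : b.proc = p := by cases hev'; rfl
  have hki : ki = ((e.w.take i).filter (fun x => decide (x.proc = p))).length := by
    cases hev; rw [hap]
  have hkj : kj = ((e.w.take j).filter (fun x => decide (x.proc = p))).length := by
    cases hev'; rw [hbp]
  have hstep : ((e.w.take (i+1)).filter (fun x => decide (x.proc = p))).length
      = ((e.w.take i).filter (fun x => decide (x.proc = p))).length + 1 := by
    rw [List.take_succ]
    have : e.w[i]? = some a := ha
    rw [this, List.filter_append]
    simp [hap]
  have hmono := filter_take_mono e.w (fun x => decide (x.proc = p)) (show i+1 ≤ j by omega)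
  omega

theorem evOf_lt_iff (e : Exec P M) {i j : ℕ} {p : P} {ki kj : ℕ}
    (hi : e.evOf i = some (p, ki)) (hj : e.evOf j = some (p, kj)) : i < j ↔ ki < kj := by
  constructor
  · exact evOf_lt_of_lt e hi hj
  · intro hk
    rcases lt_trichotomy i j with h | h | h
    · exact h
    · subst h; rw [hi] at hj
      simp at hj; omega
    · have := evOf_lt_of_lt e hj hi h; omega

theorem toMSC_src (e : Exec P M) (hwf : e.WF) {r : ℕ} {p q : P} {m : M}
    (h : e.act? r = some (.rcv p q m)) :
    ∃ evr evs, e.evOf r = some evr ∧ e.evOf (e.src r) = some evs ∧ e.toMSC.src evr = evs := by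
  obtain ⟨hlt, hsnd⟩ := hwf.1 r p q m h
  have hevr := evOf_eq e h
  have hevs := evOf_eq e hsnd
  refine ⟨_, _, hevr, hevs, ?_⟩
  show (e.evOf (e.src (e.posOf _))).getD _ = _
  rw [posOf_evOf e h, hevs]
  rfl

/-- MSC-level matchedness of an event. -/
def MatchedEv (Mm : MSC P M) (ev : P × ℕ) : Prop := ∃ rv, Mm.IsRecv rv ∧ Mm.src rv = ev

theorem matched_iff (e : Exec P M) (hwf : e.WF) {s : ℕ} {ev : P × ℕ}
    (hv : e.evOf s = some ev) : e.Matched s ↔ MatchedEv e.toMSC ev := by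
  constructor
  · rintro ⟨r, hrecv, hsrc⟩
    obtain ⟨p, q, m, hr⟩ := hrecv
    obtain ⟨evr, evs, hevr, hevs, hmsrc⟩ := toMSC_src e hwf hr
    obtain ⟨a, ha, -, hta, -⟩ := evOf_spec e hevr
    have haeq : a = Act.rcv p q m := by
      have := ha.symm.trans hr; exact Option.some_injective _ this
    refine ⟨evr, ⟨p, q, m, by rw [hta, haeq]⟩, ?_⟩
    rw [hmsrc]
    rw [hsrc] at hevs
    exact Option.some_injective _ (hevs.symm.trans hv) |>.symm ▸ rfl
  · rintro ⟨rv, ⟨p, q, m, hrv⟩, hsrc⟩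
    obtain ⟨r, hr, hevr⟩ := evOf_surj e hrv
    obtain ⟨evr, evs, hevr', hevs, hmsrc⟩ := toMSC_src e hwf hr
    have : evr = rv := Option.some_injective _ (hevr'.symm.trans hevr)
    subst this
    rw [hmsrc] at hsrc
    subst hsrc
    have : e.src r = s := evOf_inj e hevs hv
    exact ⟨r, ⟨p, q, m, hr⟩, this⟩

/-! ### RSC executions -/

/-- word-level RSC validity -/
def ValidRSC (w : List (Act P M)) : Prop :=
  ∀ i p q m, w[i]? = some (Act.rcv p q m) → ∃ j, i = j + 1 ∧ w[j]? = some (Act.snd p q m)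

theorem validRSC_of_rsc {e : Exec P M} (he : e ∈ RSCexec) : ValidRSC e.w := by
  intro i p q m h
  obtain ⟨hlt, hsnd⟩ := he.1.1 i p q m h
  have hsrc : e.src i = i - 1 := he.2 i ⟨p, q, m, h⟩
  refine ⟨i - 1, by omega, ?_⟩
  rw [← hsrc]; exact hsnd

theorem rsc_matched_iff {e : Exec P M} (he : e ∈ RSCexec) {s : ℕ} {p q : P} {m : M}
    (hs : e.act? s = some (.snd p q m)) :
    e.Matched s ↔ e.w[s + 1]? = some (Act.rcv p q m) := by
  constructor
  · rintro ⟨r, hrecv, hsrc⟩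
    obtain ⟨p', q', m', hr⟩ := hrecv
    obtain ⟨hlt, hsnd⟩ := he.1.1 r p' q' m' hr
    have hr1 : e.src r = r - 1 := he.2 r ⟨p', q', m', hr⟩
    have : r = s + 1 := by omega
    subst this
    rw [hsrc] at hsnd
    have := hsnd.symm.trans hs
    injection Option.some_injective _ this with h1 h2 h3
    subst h1; subst h2; subst h3
    exact hr
  · intro h
    refine ⟨s + 1, ⟨p, q, m, h⟩, ?_⟩
    rw [he.2 (s+1) ⟨p, q, m, h⟩]
    omega

/-! ### happens-before, word level -/

inductive hbBaseW (w : List (Act P M)) : ℕ → ℕ → Prop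
  | proc {i j : ℕ} {a b : Act P M} : i < j → w[i]? = some a → w[j]? = some b →
      a.proc = b.proc → hbBaseW w i j
  | msg {i : ℕ} {p q : P} {m : M} : w[i]? = some (Act.snd p q m) →
      w[i+1]? = some (Act.rcv p q m) → hbBaseW w i (i+1)

def hbW (w : List (Act P M)) : ℕ → ℕ → Prop := Relation.TransGen (hbBaseW w)

theorem hbBaseW_spec {w : List (Act P M)} {i j : ℕ} (h : hbBaseW w i j) :
    i < j ∧ (∃ a, w[i]? = some a) ∧ ∃ b, w[j]? = some b := by
  cases h with
  | proc hij ha hb _ => exact ⟨hij, ⟨_, ha⟩, ⟨_, hb⟩⟩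
  | msg hs hr => exact ⟨by omega, ⟨_, hs⟩, ⟨_, hr⟩⟩

theorem hbW_lt {w : List (Act P M)} {i j : ℕ} (h : hbW w i j) : i < j := by
  induction h with
  | single h => exact (hbBaseW_spec h).1
  | tail _ h ih => exact lt_trans ih (hbBaseW_spec h).1

theorem hbW_some_left {w : List (Act P M)} {i j : ℕ} (h : hbW w i j) : ∃ a, w[i]? = some a := by
  induction h with
  | single h => exact (hbBaseW_spec h).2.1
  | tail _ _ ih => exact ih

theorem hbW_some_right {w : List (Act P M)} {i j : ℕ} (h : hbW w i j) : ∃ b, w[j]? = some b := by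
  induction h with
  | single h => exact (hbBaseW_spec h).2.2
  | tail _ h _ => exact (hbBaseW_spec h).2.2

/-! ### hb correspondence for RSC executions -/

theorem hbBaseW_to_hb {e : Exec P M} (he : e ∈ RSCexec) {i j : ℕ} (h : hbBaseW e.w i j) :
    ∃ ev₁ ev₂, e.evOf i = some ev₁ ∧ e.evOf j = some ev₂ ∧ MSC.hbBase e.toMSC ev₁ ev₂ := by
  cases h with
  | @proc _ a b hij ha hb hproc =>
    have hevi := evOf_eq e (show e.act? i = some a from ha)
    have hevj := evOf_eq e (show e.act? j = some b from hb)
    rw [hproc] at hevi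
    have hki := evOf_lt_of_lt e hevi hevj hij
    have hlen : ((e.w.take j).filter (fun x => decide (x.proc = b.proc))).length
        < (e.toMSC.w b.proc).length := by
      have := toMSC_act e (show e.act? j = some b from hb)
      exact act?_lt (w := e.toMSC.w b.proc) this
    exact ⟨_, _, hevi, hevj, MSC.hbBase.proc b.proc _ _ hki hlen⟩
  | @msg p q m hs hr =>
    have hrecv : e.act? (i+1) = some (Act.rcv p q m) := hr
    obtain ⟨evr, evs, hevr, hevs, hmsrc⟩ := toMSC_src e he.1 hrecv
    have hsrc : e.src (i+1) = i := by
      have := he.2 (i+1) ⟨p, q, m, hrecv⟩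
      omega
    rw [hsrc] at hevs
    obtain ⟨a, ha, -, hta, -⟩ := evOf_spec e hevr
    have haeq : a = Act.rcv p q m := Option.some_injective _ (ha.symm.trans hrecv)
    have hisr : e.toMSC.IsRecv evr := ⟨p, q, m, by rw [hta, haeq]⟩
    refine ⟨evs, evr, hevs, hevr, ?_⟩
    have := MSC.hbBase.msg evr hisr
    rw [hmsrc] at this
    exact this

theorem hbW_to_hbM {e : Exec P M} (he : e ∈ RSCexec) {i j : ℕ} (h : hbW e.w i j) :
    e.hbM i j := by
  induction h with
  | single h =>
    obtain ⟨ev₁, ev₂, h1, h2, hb⟩ := hbBaseW_to_hb he h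
    exact ⟨ev₁, ev₂, h1, h2, Relation.TransGen.single hb⟩
  | tail _ h ih =>
    obtain ⟨ev₁, evk, h1, hk, hb⟩ := ih
    obtain ⟨evk', ev₂, hk', h2, hb'⟩ := hbBaseW_to_hb he h
    have : evk' = evk := Option.some_injective _ (hk'.symm.trans hk)
    subst this
    exact ⟨ev₁, ev₂, h1, h2, hb.trans (Relation.TransGen.single hb')⟩

theorem hbBase_act {e : Exec P M} (hwf : e.WF) {ev ev' : P × ℕ}
    (h : MSC.hbBase e.toMSC ev ev') :
    (∃ a, e.toMSC.act? ev = some a) ∧ ∃ b, e.toMSC.act? ev' = some b := by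
  cases h with
  | proc p i j hij hj =>
    constructor
    · show ∃ a, (e.toMSC.w p)[i]? = some a
      exact ⟨_, List.getElem?_eq_getElem (by omega)⟩
    · show ∃ b, (e.toMSC.w p)[j]? = some b
      exact ⟨_, List.getElem?_eq_getElem hj⟩
  | msg ev' hrecv =>
    obtain ⟨p, q, m, hrv⟩ := hrecv
    obtain ⟨r, hr, hevr⟩ := evOf_surj e hrv
    obtain ⟨evr, evs, hevr', hevs, hmsrc⟩ := toMSC_src e hwf hr
    have : evr = ev' := Option.some_injective _ (hevr'.symm.trans hevr)
    subst this
    obtain ⟨b, hb, -, htb, -⟩ := evOf_spec e hevs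
    exact ⟨⟨b, by rw [hmsrc]; exact htb⟩, ⟨_, hrv⟩⟩

theorem hbBase_to_hbBaseW {e : Exec P M} (he : e ∈ RSCexec) {ev ev' : P × ℕ} {i j : ℕ}
    (h : MSC.hbBase e.toMSC ev ev') (hi : e.evOf i = some ev) (hj : e.evOf j = some ev') :
    hbBaseW e.w i j := by
  cases h with
  | proc p ki kj hk hlen =>
    obtain ⟨a, ha, heva, -, -⟩ := evOf_spec e hi
    obtain ⟨b, hb, hevb, -, -⟩ := evOf_spec e hj
    have hap : p = a.proc := (Prod.ext_iff.1 heva).1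
    have hbp : p = b.proc := (Prod.ext_iff.1 hevb).1
    exact hbBaseW.proc ((evOf_lt_iff e hi hj).2 hk) ha hb (by rw [← hap, ← hbp])
  | msg ev2 hrecv =>
    obtain ⟨p, q, m, hrv⟩ := hrecv
    obtain ⟨r, hr, hevr⟩ := evOf_surj e hrv
    have hjr : j = r := evOf_inj e hj hevr
    subst hjr
    obtain ⟨evr, evs, hevr', hevs, hmsrc⟩ := toMSC_src e he.1 hr
    have hee : evr = ev' := Option.some_injective _ (hevr'.symm.trans hevr)
    subst hee
    have hsrc : e.src j = j - 1 := he.2 j ⟨p, q, m, hr⟩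
    have hjpos : 0 < j := by
      have := (he.1.1 j p q m hr).1
      omega
    rw [hsrc] at hevs
    have hieq : i = j - 1 := by
      apply evOf_inj e hi
      rw [hmsrc]
      exact hevs
    subst hieq
    obtain ⟨hlt, hsnd⟩ := he.1.1 j p q m hr
    rw [hsrc] at hsnd
    have hj1 : (j - 1) + 1 = j := by omega
    have := hbBaseW.msg (w := e.w) (show e.w[j-1]? = some (Act.snd p q m) from hsnd)
      (by rw [hj1]; exact hr)
    rw [hj1] at this
    exact this

theorem hbM_to_hbW {e : Exec P M} (he : e ∈ RSCexec) {i j : ℕ} (h : e.hbM i j) :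
    hbW e.w i j := by
  obtain ⟨ev₁, ev₂, h1, h2, hb⟩ := h
  revert j
  induction hb with
  | single hbase =>
    intro j h2
    exact Relation.TransGen.single (hbBase_to_hbBaseW he hbase h1 h2)
  | tail hp hbase ih =>
    intro j h2
    obtain ⟨⟨b, hbk⟩, -⟩ := hbBase_act he.1 hbase
    obtain ⟨k, hk, hevk⟩ := evOf_surj e hbk
    exact Relation.TransGen.tail (ih hevk) (hbBase_to_hbBaseW he hbase hevk h2)

/-! ### canonical executions and transport -/

def canon (w : List (Act P M)) : Exec P M := ⟨w, fun i => i - 1⟩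

theorem canon_w (w : List (Act P M)) : (canon w).w = w := rfl

theorem canon_wf {w : List (Act P M)} (h : ValidRSC w) : (canon w).WF := by
  constructor
  · intro i p q m hi
    obtain ⟨j, rfl, hj⟩ := h i p q m hi
    constructor
    · show j + 1 - 1 < j + 1
      omega
    · show w[j + 1 - 1]? = _
      simpa using hj
  · intro i j hi hj hij
    obtain ⟨p, q, m, hi'⟩ := hi
    obtain ⟨p', q', m', hj'⟩ := hj
    obtain ⟨i0, rfl, -⟩ := h i p q m hi'
    obtain ⟨j0, rfl, -⟩ := h j p' q' m' hj'
    simp only [canon] at hij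
    omega

theorem canon_rsc {w : List (Act P M)} (h : ValidRSC w) : canon w ∈ RSCexec :=
  ⟨canon_wf h, fun _ _ => rfl⟩

theorem transport_pos {e e' : Exec P M} (hwf : e.WF) (hwf' : e'.WF)
    (hMeq : e'.toMSC = e.toMSC) {s : ℕ} {a : Act P M} (hs : e.act? s = some a) :
    ∃ (s' k : ℕ), e.evOf s = some (a.proc, k) ∧ e'.evOf s' = some (a.proc, k)
      ∧ e'.act? s' = some a ∧ (e.Matched s ↔ e'.Matched s') := by
  have hev := evOf_eq e hs
  have hMa : e'.toMSC.act?
      (a.proc, ((e.w.take s).filter (fun b => decide (b.proc = a.proc))).length) = some a := by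
    rw [hMeq]; exact toMSC_act e hs
  obtain ⟨s', hs', hev'⟩ := evOf_surj e' hMa
  refine ⟨s', _, hev, hev', hs', ?_⟩
  rw [matched_iff e hwf hev, matched_iff e' hwf' hev', hMeq]

/-! ### counting (for synch) -/

variable [DecidableEq M]

def posA (e : Exec P M) (a : Act P M) : Finset ℕ :=
  (Finset.range e.w.length).filter (fun i => e.w[i]? = some a)

theorem mem_posA {e : Exec P M} {a : Act P M} {i : ℕ} :
    i ∈ posA e a ↔ e.w[i]? = some a := by
  unfold posA
  simp only [Finset.mem_filter, Finset.mem_range]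
  constructor
  · exact fun h => h.2
  · intro h; exact ⟨act?_lt h, h⟩

theorem card_filter_pos (w : List (Act P M)) (a : Act P M) :
    ((Finset.range w.length).filter (fun i => w[i]? = some a)).card = w.count a := by
  induction w using List.reverseRecOn with
  | nil => simp
  | append_singleton w b ih =>
    have hfc : Finset.filter (fun i => (w ++ [b])[i]? = some a) (Finset.range w.length)
        = Finset.filter (fun i => w[i]? = some a) (Finset.range w.length) :=
      Finset.filter_congr (fun i hi => by
        rw [getElem?_append_lt [b] (Finset.mem_range.1 hi)])
    rw [List.length_append, List.length_singleton, List.count_append,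
      Finset.range_add_one, Finset.filter_insert, hfc]
    by_cases hba : b = a
    · rw [if_pos (by rw [List.getElem?_concat_length, hba])]
      rw [Finset.card_insert_of_notMem (by simp)]
      rw [ih]
      simp [hba]
    · rw [if_neg (by rw [List.getElem?_concat_length]; simp [hba])]
      rw [ih]
      rw [List.count_singleton]
      simp [hba]

theorem card_posA (e : Exec P M) (a : Act P M) : (posA e a).card = e.w.count a := by
  unfold posA
  exact card_filter_pos e.w a

theorem count_filter_proc (w : List (Act P M)) (a : Act P M) :
    (w.filter (fun b => decide (b.proc = a.proc))).count a = w.count a :=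
  List.count_filter (by simp)

theorem count_toMSC_eq {e e' : Exec P M} (hMeq : e'.toMSC = e.toMSC) (a : Act P M) :
    e.w.count a = e'.w.count a := by
  have h1 := count_filter_proc e.w a
  have h2 := count_filter_proc e'.w a
  rw [← h1, ← h2, ← toMSC_w, ← toMSC_w, hMeq]

/-! ### word-level model predicates -/

def AllM (w : List (Act P M)) : Prop :=
  ∀ i p q m, w[i]? = some (Act.snd p q m) → w[i+1]? = some (Act.rcv p q m)

def BadP (w : List (Act P M)) : Prop :=
  ∃ (p q : P) (s1 s2 : ℕ) (m1 m2 : M),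
    s1 < s2 ∧ w[s1]? = some (Act.snd p q m1) ∧ ¬(w[s1+1]? = some (Act.rcv p q m1)) ∧
    w[s2]? = some (Act.snd p q m2) ∧ w[s2+1]? = some (Act.rcv p q m2)

def BadC (w : List (Act P M)) : Prop :=
  ∃ (q p1 p2 : P) (s1 s2 : ℕ) (m1 m2 : M),
    hbW w s1 s2 ∧ w[s1]? = some (Act.snd p1 q m1) ∧ ¬(w[s1+1]? = some (Act.rcv p1 q m1)) ∧
    w[s2]? = some (Act.snd p2 q m2) ∧ w[s2+1]? = some (Act.rcv p2 q m2)

/-! ### semantics: bag -/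

theorem sem_bag (w : List (Act P M)) :
    ValidRSC w ↔ ∃ e ∈ RSCexec, e.w = w ∧ e.toMSC ∈ MSCModel (bag (P := P) (M := M)) ∩ MSCrsc := by
  constructor
  · intro h
    refine ⟨canon w, canon_rsc h, rfl, ⟨canon w, ⟨canon_wf h, rfl⟩, canon_wf h⟩,
      canon w, canon_rsc h, rfl⟩
  · rintro ⟨e, he, rfl, -⟩
    exact validRSC_of_rsc he

/-! ### semantics: synch -/

theorem sem_synch (w : List (Act P M)) :
    (ValidRSC w ∧ AllM w)
      ↔ ∃ e ∈ RSCexec, e.w = w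
          ∧ e.toMSC ∈ MSCModel (synch (P := P) (M := M)) ∩ MSCrsc := by
  constructor
  · rintro ⟨h, hall⟩
    have hsy : canon w ∈ synch := by
      refine ⟨canon_wf h, ?_⟩
      rintro s ⟨p, q, m, hs⟩
      have hr : w[s+1]? = some (Act.rcv p q m) := hall s p q m hs
      refine ⟨⟨p, q, m, hr⟩, ?_⟩
      show s + 1 - 1 = s
      omega
    exact ⟨canon w, canon_rsc h, rfl, ⟨canon w, ⟨canon_wf h, rfl⟩, hsy⟩,
      canon w, canon_rsc h, rfl⟩
  · rintro ⟨e, he, rfl, ⟨e', ⟨⟨hwf', hMeq'⟩, hwf'', hss⟩⟩, -⟩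
    refine ⟨validRSC_of_rsc he, ?_⟩
    intro i p q m hi
    -- in e', every send is matched by the next position
    have hmaps : ∀ s ∈ posA e' (Act.snd p q m), s + 1 ∈ posA e' (Act.rcv p q m) := by
      intro s hsmem
      have hs : e'.act? s = some (Act.snd p q m) := mem_posA.1 hsmem
      obtain ⟨⟨p', q', m', hr'⟩, hsrc'⟩ := hss s ⟨p, q, m, hs⟩
      obtain ⟨hlt', hsnd'⟩ := hwf'.1 (s+1) p' q' m' hr'
      rw [hsrc'] at hsnd'
      have heq : Act.snd p q m = Act.snd p' q' m' :=
        Option.some_injective _ (hs.symm.trans hsnd')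
      injection heq with e1 e2 e3
      subst e1; subst e2; subst e3
      rw [mem_posA]
      exact hr'
    have hcard1 : (posA e' (Act.snd p q m)).card ≤ (posA e' (Act.rcv p q m)).card := by
      exact Finset.card_le_card_of_injOn (fun s => s + 1) hmaps
        (fun x _ y _ hxy => by simpa using hxy)
    have hcard2 : (posA e (Act.snd p q m)).card = (posA e' (Act.snd p q m)).card := by
      rw [card_posA, card_posA, count_toMSC_eq hMeq']
    have hcard3 : (posA e (Act.rcv p q m)).card = (posA e' (Act.rcv p q m)).card := by
      rw [card_posA, card_posA, count_toMSC_eq hMeq']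
    -- in e, src is an injection from receives into sends
    have hmaps2 : ∀ r ∈ posA e (Act.rcv p q m), e.src r ∈ posA e (Act.snd p q m) := by
      intro r hrmem
      have hr : e.act? r = some (Act.rcv p q m) := mem_posA.1 hrmem
      obtain ⟨hlt, hsnd⟩ := he.1.1 r p q m hr
      rw [mem_posA]
      exact hsnd
    have hinj2 : ∀ r₁ ∈ posA e (Act.rcv p q m), ∀ r₂ ∈ posA e (Act.rcv p q m), e.src r₁ = e.src r₂ → r₁ = r₂ := by
      intro r₁ h1 r₂ h2 h12
      exact he.1.2 r₁ r₂ ⟨p, q, m, mem_posA.1 h1⟩ ⟨p, q, m, mem_posA.1 h2⟩ h12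
    have hcard : (posA e (Act.snd p q m)).card ≤ (posA e (Act.rcv p q m)).card := by
      omega
    have hsurj := Finset.surj_on_of_inj_on_of_card_le (s := posA e (Act.rcv p q m)) (t := posA e (Act.snd p q m))
      (fun r _ => e.src r) (fun r hr => hmaps2 r hr) (fun r₁ r₂ h1 h2 => hinj2 r₁ h1 r₂ h2)
      hcard
    obtain ⟨r, hrmem, hri⟩ := hsurj i (mem_posA.2 hi)
    have hmatched : e.Matched i := ⟨r, ⟨p, q, m, mem_posA.1 hrmem⟩, hri.symm⟩
    exact (rsc_matched_iff he hi).1 hmatched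

/-! ### semantics: p2p -/

theorem sem_p2p (w : List (Act P M)) :
    (ValidRSC w ∧ ¬ BadP w)
      ↔ ∃ e ∈ RSCexec, e.w = w
          ∧ e.toMSC ∈ MSCModel (p2p (P := P) (M := M)) ∩ MSCrsc := by
  constructor
  · rintro ⟨h, hnb⟩
    have hp : canon w ∈ p2p := by
      refine ⟨canon_wf h, ?_⟩
      intro s1 s2 p q m1 m2 h1 h2 hlt
      by_cases hm : (canon w).Matched s2
      · right
        have hw2 : w[s2+1]? = some (Act.rcv p q m2) := (rsc_matched_iff (canon_rsc h) h2).1 hm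
        have hw1 : w[s1+1]? = some (Act.rcv p q m1) := by
          by_contra hc
          exact hnb ⟨p, q, s1, s2, m1, m2, hlt, h1, hc, h2, hw2⟩
        refine ⟨s1 + 1, s2 + 1, by omega, ⟨p, q, m1, hw1⟩, ⟨p, q, m2, hw2⟩, ?_, ?_⟩
        · show s1 + 1 - 1 = s1; omega
        · show s2 + 1 - 1 = s2; omega
      · left; exact hm
    exact ⟨canon w, canon_rsc h, rfl, ⟨canon w, ⟨canon_wf h, rfl⟩, hp⟩,
      canon w, canon_rsc h, rfl⟩
  · rintro ⟨e, he, rfl, ⟨e', ⟨⟨hwf', hMeq'⟩, hwf'', hpp⟩⟩, -⟩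
    refine ⟨validRSC_of_rsc he, ?_⟩
    rintro ⟨p, q, s1, s2, m1, m2, hlt, h1, hn1, h2, hm2⟩
    obtain ⟨s1', k1, hev1, hev1', hact1', hiff1⟩ := transport_pos he.1 hwf' hMeq' h1
    obtain ⟨s2', k2, hev2, hev2', hact2', hiff2⟩ := transport_pos he.1 hwf' hMeq' h2
    have hm2' : e'.Matched s2' := hiff2.1 ((rsc_matched_iff he h2).2 hm2)
    have hk : k1 < k2 := by
      have := (evOf_lt_iff e (p := p) hev1 hev2).1 hlt
      exact this
    have hlt' : s1' < s2' := (evOf_lt_iff e' (p := p) hev1' hev2').2 hk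
    rcases hpp s1' s2' p q m1 m2 hact1' hact2' hlt' with hnm | ⟨r1, r2, hr12, hrecv1, hrecv2, hsrc1, hsrc2⟩
    · exact hnm hm2'
    · have hm1' : e'.Matched s1' := ⟨r1, hrecv1, hsrc1⟩
      have hm1 : e.Matched s1 := hiff1.2 hm1'
      exact hn1 ((rsc_matched_iff he h1).1 hm1)

/-! ### semantics: causal -/

theorem sem_causal (w : List (Act P M)) :
    (ValidRSC w ∧ ¬ BadC w)
      ↔ ∃ e ∈ RSCexec, e.w = w
          ∧ e.toMSC ∈ MSCModel (causal (P := P) (M := M)) ∩ MSCrsc := by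
  constructor
  · rintro ⟨h, hnb⟩
    have hc : canon w ∈ causal := by
      refine ⟨canon_wf h, ?_⟩
      intro s1 s2 p1 p2 q m1 m2 h1 h2 hhb
      by_cases hm : (canon w).Matched s2
      · right
        have hw2 : w[s2+1]? = some (Act.rcv p2 q m2) := (rsc_matched_iff (canon_rsc h) h2).1 hm
        have hhbw : hbW w s1 s2 := hbM_to_hbW (canon_rsc h) hhb
        have hw1 : w[s1+1]? = some (Act.rcv p1 q m1) := by
          by_contra hcn
          exact hnb ⟨q, p1, p2, s1, s2, m1, m2, hhbw, h1, hcn, h2, hw2⟩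
        have hlt : s1 < s2 := hbW_lt hhbw
        refine ⟨s1 + 1, s2 + 1, ?_, ⟨p1, q, m1, hw1⟩, ⟨p2, q, m2, hw2⟩, ?_, ?_⟩
        · exact hbW_to_hbM (canon_rsc h)
            (Relation.TransGen.single (hbBaseW.proc (by omega) hw1 hw2 rfl))
        · show s1 + 1 - 1 = s1; omega
        · show s2 + 1 - 1 = s2; omega
      · left; exact hm
    exact ⟨canon w, canon_rsc h, rfl, ⟨canon w, ⟨canon_wf h, rfl⟩, hc⟩,
      canon w, canon_rsc h, rfl⟩
  · rintro ⟨e, he, rfl, ⟨e', ⟨⟨hwf', hMeq'⟩, hwf'', hcc⟩⟩, -⟩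
    refine ⟨validRSC_of_rsc he, ?_⟩
    rintro ⟨q, p1, p2, s1, s2, m1, m2, hhbw, h1, hn1, h2, hm2⟩
    obtain ⟨s1', k1, hev1, hev1', hact1', hiff1⟩ := transport_pos he.1 hwf' hMeq' h1
    obtain ⟨s2', k2, hev2, hev2', hact2', hiff2⟩ := transport_pos he.1 hwf' hMeq' h2
    have hm2' : e'.Matched s2' := hiff2.1 ((rsc_matched_iff he h2).2 hm2)
    obtain ⟨ev1, ev2, hev1c, hev2c, hhb⟩ := hbW_to_hbM he hhbw
    have he1 : ev1 = ((Act.snd p1 q m1).proc, k1) := Option.some_injective _ (hev1c.symm.trans hev1)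
    have he2 : ev2 = ((Act.snd p2 q m2).proc, k2) := Option.some_injective _ (hev2c.symm.trans hev2)
    subst he1; subst he2
    have hhb' : e'.hbM s1' s2' := ⟨_, _, hev1', hev2', by rw [hMeq']; exact hhb⟩
    rcases hcc s1' s2' p1 p2 q m1 m2 hact1' hact2' hhb' with hnm |
      ⟨r1, r2, hr12, hrecv1, hrecv2, hsrc1, hsrc2⟩
    · exact hnm hm2'
    · have hm1' : e'.Matched s1' := ⟨r1, hrecv1, hsrc1⟩
      have hm1 : e.Matched s1 := hiff1.2 hm1'
      exact hn1 ((rsc_matched_iff he h1).1 hm1)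

/-! ### append lemmas for the automaton -/

def Qs (w : List (Act P M)) : Prop :=
  ∀ i p q m, i + 1 < w.length → w[i]? = some (Act.snd p q m) → w[i+1]? = some (Act.rcv p q m)

def UnmS (w : List (Act P M)) (p q : P) : Prop :=
  ∃ s m, w[s]? = some (Act.snd p q m) ∧ s + 1 < w.length ∧ w[s+1]? ≠ some (Act.rcv p q m)

def srcAt (w : List (Act P M)) (q : P) (s : ℕ) : Prop :=
  ∃ p m, w[s]? = some (Act.snd p q m) ∧ s + 1 < w.length ∧ w[s+1]? ≠ some (Act.rcv p q m)

theorem getLast?_getElem? {w : List (Act P M)} {x : Act P M} :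
    w.getLast? = some x ↔ w[w.length - 1]? = some x := by
  rw [List.getLast?_eq_getElem?]

theorem valid_append {w : List (Act P M)} {a : Act P M} :
    ValidRSC (w ++ [a]) ↔ ValidRSC w
      ∧ ∀ p q m, a = Act.rcv p q m → w.getLast? = some (Act.snd p q m) := by
  constructor
  · intro h
    constructor
    · intro i p q m hi
      have hi' : (w ++ [a])[i]? = some (Act.rcv p q m) := by
        rw [getElem?_append_lt _ (act?_lt hi)]; exact hi
      obtain ⟨j, rfl, hj⟩ := h i p q m hi'
      refine ⟨j, rfl, ?_⟩
      rw [getElem?_append_lt _ (by have := act?_lt hi; omega)] at hj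
      exact hj
    · rintro p q m rfl
      have hn : (w ++ [Act.rcv p q m])[w.length]? = some (Act.rcv p q m) :=
        List.getElem?_concat_length
      obtain ⟨j, hj1, hj⟩ := h w.length p q m hn
      have hjlt : j < w.length := by omega
      rw [getElem?_append_lt _ hjlt] at hj
      rw [getLast?_getElem?]
      have : j = w.length - 1 := by omega
      rw [← this]; exact hj
  · rintro ⟨h1, h2⟩ i p q m hi
    rcases Nat.lt_trichotomy i w.length with hlt | heq | hgt
    · rw [getElem?_append_lt _ hlt] at hi
      obtain ⟨j, rfl, hj⟩ := h1 i p q m hi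
      exact ⟨j, rfl, by rw [getElem?_append_lt _ (by omega)]; exact hj⟩
    · subst heq
      rw [List.getElem?_concat_length] at hi
      have ha : a = Act.rcv p q m := Option.some_injective _ hi
      have := h2 p q m ha
      rw [getLast?_getElem?] at this
      have hw : 0 < w.length := by
        rcases Nat.eq_zero_or_pos w.length with h0 | h0
        · exfalso
          have hwnil : w = [] := List.length_eq_zero_iff.1 h0
          rw [hwnil] at this
          simp at this
        · exact h0
      refine ⟨w.length - 1, by omega, ?_⟩
      rw [getElem?_append_lt _ (by omega)]
      exact this
    · rw [List.getElem?_append_right (by omega)] at hi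
      have : w.length + 1 ≤ i := by omega
      rw [List.getElem?_eq_none (by simp; omega)] at hi
      exact absurd hi (by simp)

theorem qs_append {w : List (Act P M)} {a : Act P M} :
    Qs (w ++ [a]) ↔ Qs w
      ∧ ∀ p q m, w.getLast? = some (Act.snd p q m) → a = Act.rcv p q m := by
  have hn : (w ++ [a]).length = w.length + 1 := by simp
  constructor
  · intro h
    constructor
    · intro i p q m hi hs
      have := h i p q m (by omega) (by rw [getElem?_append_lt _ (by omega)]; exact hs)
      rw [getElem?_append_lt _ (by omega)] at this
      exact this
    · intro p q m hl
      rw [getLast?_getElem?] at hl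
      have hw : 0 < w.length := by
        rcases Nat.eq_zero_or_pos w.length with h0 | h0
        · rw [h0] at hl; simp at hl
          have : w = [] := List.length_eq_zero_iff.1 h0
          rw [this] at hl; simp at hl
        · exact h0
      have := h (w.length - 1) p q m (by omega)
        (by rw [getElem?_append_lt _ (by omega)]; exact hl)
      rw [show w.length - 1 + 1 = w.length by omega, List.getElem?_concat_length] at this
      exact (Option.some_injective _ this)
  · rintro ⟨h1, h2⟩ i p q m hi hs
    rw [hn] at hi
    rcases Nat.lt_trichotomy (i + 1) w.length with hlt | heq | hgt
    · rw [getElem?_append_lt _ (by omega)] at hs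
      rw [getElem?_append_lt _ hlt]
      exact h1 i p q m hlt hs
    · rw [getElem?_append_lt _ (by omega)] at hs
      have hl : w.getLast? = some (Act.snd p q m) := by
        rw [getLast?_getElem?, show w.length - 1 = i by omega]; exact hs
      rw [heq, List.getElem?_concat_length, h2 p q m hl]
    · omega

theorem unmS_append {w : List (Act P M)} {a : Act P M} {p q : P} :
    UnmS (w ++ [a]) p q ↔ UnmS w p q
      ∨ ∃ m, w.getLast? = some (Act.snd p q m) ∧ a ≠ Act.rcv p q m := by
  have hn : (w ++ [a]).length = w.length + 1 := by simp
  constructor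
  · rintro ⟨s, m, hs, hlt, hne⟩
    rw [hn] at hlt
    rcases Nat.lt_trichotomy (s + 1) w.length with h1 | h1 | h1
    · left
      rw [getElem?_append_lt _ (by omega)] at hs
      rw [getElem?_append_lt _ h1] at hne
      exact ⟨s, m, hs, h1, hne⟩
    · right
      rw [getElem?_append_lt _ (by omega)] at hs
      rw [h1, List.getElem?_concat_length] at hne
      refine ⟨m, ?_, fun hc => hne (by rw [hc])⟩
      rw [getLast?_getElem?, show w.length - 1 = s by omega]
      exact hs
    · omega
  · rintro (⟨s, m, hs, hlt, hne⟩ | ⟨m, hl, hne⟩)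
    · refine ⟨s, m, ?_, by rw [hn]; omega, ?_⟩
      · rw [getElem?_append_lt _ (by omega)]; exact hs
      · rw [getElem?_append_lt _ hlt]; exact hne
    · rw [getLast?_getElem?] at hl
      have hw : 0 < w.length := by
        rcases Nat.eq_zero_or_pos w.length with h0 | h0
        · have : w = [] := List.length_eq_zero_iff.1 h0
          rw [this] at hl; simp at hl
        · exact h0
      refine ⟨w.length - 1, m, ?_, by rw [hn]; omega, ?_⟩
      · rw [getElem?_append_lt _ (by omega)]; exact hl
      · rw [show w.length - 1 + 1 = w.length by omega, List.getElem?_concat_length]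
        intro hc
        exact hne (Option.some_injective _ hc)

theorem srcAt_append {w : List (Act P M)} {a : Act P M} {q : P} {s : ℕ} :
    srcAt (w ++ [a]) q s ↔ srcAt w q s
      ∨ (s + 1 = w.length ∧ ∃ p m, w.getLast? = some (Act.snd p q m) ∧ a ≠ Act.rcv p q m) := by
  have hn : (w ++ [a]).length = w.length + 1 := by simp
  constructor
  · rintro ⟨p, m, hs, hlt, hne⟩
    rw [hn] at hlt
    rcases Nat.lt_trichotomy (s + 1) w.length with h1 | h1 | h1
    · left
      rw [getElem?_append_lt _ (by omega)] at hs
      rw [getElem?_append_lt _ h1] at hne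
      exact ⟨p, m, hs, h1, hne⟩
    · right
      rw [getElem?_append_lt _ (by omega)] at hs
      rw [h1, List.getElem?_concat_length] at hne
      refine ⟨h1, p, m, ?_, fun hc => hne (by rw [hc])⟩
      rw [getLast?_getElem?, show w.length - 1 = s by omega]
      exact hs
    · omega
  · rintro (⟨p, m, hs, hlt, hne⟩ | ⟨hs1, p, m, hl, hne⟩)
    · refine ⟨p, m, ?_, by rw [hn]; omega, ?_⟩
      · rw [getElem?_append_lt _ (by omega)]; exact hs
      · rw [getElem?_append_lt _ hlt]; exact hne
    · rw [getLast?_getElem?] at hl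
      refine ⟨p, m, ?_, by rw [hn]; omega, ?_⟩
      · rw [getElem?_append_lt _ (by omega), show s = w.length - 1 by omega]; exact hl
      · rw [hs1, List.getElem?_concat_length]
        intro hc
        exact hne (Option.some_injective _ hc)

theorem badP_append {w : List (Act P M)} {a : Act P M} :
    BadP (w ++ [a]) ↔ BadP w
      ∨ ∃ p q m2, w.getLast? = some (Act.snd p q m2) ∧ a = Act.rcv p q m2 ∧ UnmS w p q := by
  constructor
  · rintro ⟨p, q, s1, s2, m1, m2, hlt, h1, hn1, h2, hm2⟩
    have hs2 : s2 + 1 < w.length + 1 := by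
      have := act?_lt hm2; simpa using this
    rcases Nat.lt_trichotomy (s2 + 1) w.length with hc | hc | hc
    · left
      rw [getElem?_append_lt _ (by omega)] at h1 h2
      rw [getElem?_append_lt _ (by omega)] at hn1 hm2
      exact ⟨p, q, s1, s2, m1, m2, hlt, h1, hn1, h2, hm2⟩
    · right
      rw [getElem?_append_lt _ (by omega)] at h1 h2
      rw [getElem?_append_lt _ (by omega)] at hn1
      rw [hc, List.getElem?_concat_length] at hm2
      refine ⟨p, q, m2, ?_, (Option.some_injective _ hm2), s1, m1, h1, by omega, hn1⟩
      rw [getLast?_getElem?, show w.length - 1 = s2 by omega]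
      exact h2
    · omega
  · rintro (⟨p, q, s1, s2, m1, m2, hlt, h1, hn1, h2, hm2⟩ | ⟨p, q, m2, hl, ha, s1, m1, h1, hlt1, hn1⟩)
    · have hs2 : s2 + 1 < w.length := act?_lt hm2
      refine ⟨p, q, s1, s2, m1, m2, hlt, ?_, ?_, ?_, ?_⟩
      · rw [getElem?_append_lt _ (by omega)]; exact h1
      · rw [getElem?_append_lt _ (by omega)]; exact hn1
      · rw [getElem?_append_lt _ (by omega)]; exact h2
      · rw [getElem?_append_lt _ (by omega)]; exact hm2
    · rw [getLast?_getElem?] at hl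
      refine ⟨p, q, s1, w.length - 1, m1, m2, by omega, ?_, ?_, ?_, ?_⟩
      · rw [getElem?_append_lt _ (by omega)]; exact h1
      · rw [getElem?_append_lt _ (by omega)]; exact hn1
      · rw [getElem?_append_lt _ (by omega)]; exact hl
      · rw [show w.length - 1 + 1 = w.length by omega, List.getElem?_concat_length, ha]

/-! ### hbW and appending -/

theorem hbBaseW_mono {w : List (Act P M)} {a : Act P M} {i j : ℕ} (h : hbBaseW w i j) :
    hbBaseW (w ++ [a]) i j := by
  cases h with
  | @proc _ b c hij hb hc hproc =>
    exact hbBaseW.proc hij (by rw [getElem?_append_lt _ (act?_lt hb)]; exact hb)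
      (by rw [getElem?_append_lt _ (act?_lt hc)]; exact hc) hproc
  | @msg p q m hs hr =>
    exact hbBaseW.msg (by rw [getElem?_append_lt _ (act?_lt hs)]; exact hs)
      (by rw [getElem?_append_lt _ (act?_lt hr)]; exact hr)

theorem hbW_mono {w : List (Act P M)} {a : Act P M} {i j : ℕ} (h : hbW w i j) :
    hbW (w ++ [a]) i j :=
  Relation.TransGen.mono (fun _ _ hb => hbBaseW_mono hb) _ _ h

theorem hbBaseW_restrict {w : List (Act P M)} {a : Act P M} {i j : ℕ}
    (h : hbBaseW (w ++ [a]) i j) (hj : j < w.length) : hbBaseW w i j := by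
  cases h with
  | @proc _ b c hij hb hc hproc =>
    rw [getElem?_append_lt _ (by omega : i < w.length)] at hb
    rw [getElem?_append_lt _ hj] at hc
    exact hbBaseW.proc hij hb hc hproc
  | @msg p q m hs hr =>
    rw [getElem?_append_lt _ (by omega : i < w.length)] at hs
    rw [getElem?_append_lt _ hj] at hr
    exact hbBaseW.msg hs hr

theorem hbW_restrict {w : List (Act P M)} {a : Act P M} {i j : ℕ}
    (h : hbW (w ++ [a]) i j) (hj : j < w.length) : hbW w i j := by
  induction h with
  | single h => exact Relation.TransGen.single (hbBaseW_restrict h hj)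
  | @tail k l hp h ih =>
    have hkl : k < l := (hbBaseW_spec h).1
    exact Relation.TransGen.tail (ih (by omega)) (hbBaseW_restrict h hj)

theorem hbBaseW_cases {w : List (Act P M)} {i j : ℕ} (h : hbBaseW w i j) :
    (∃ b c, i < j ∧ w[i]? = some b ∧ w[j]? = some c ∧ b.proc = c.proc)
    ∨ (j = i + 1 ∧ ∃ p q m, w[i]? = some (Act.snd p q m) ∧ w[j]? = some (Act.rcv p q m)) := by
  cases h with
  | @proc _ b c hij hb hc hproc => exact Or.inl ⟨b, c, hij, hb, hc, hproc⟩
  | @msg p q m hs hr => exact Or.inr ⟨rfl, p, q, m, hs, hr⟩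

theorem hbW_snoc_last {w : List (Act P M)} {a : Act P M} {i : ℕ} :
    hbW (w ++ [a]) i w.length
      ↔ (∃ k b, (hbW w i k ∨ i = k) ∧ w[k]? = some b ∧ b.proc = a.proc)
        ∨ (∃ p q m, a = Act.rcv p q m ∧ w.getLast? = some (Act.snd p q m)
            ∧ (hbW w i (w.length - 1) ∨ i = w.length - 1)) := by
  constructor
  · intro h
    obtain ⟨k, hrt, hedge⟩ := Relation.TransGen.tail'_iff.1 h
    have hor : k = i ∨ hbW (w ++ [a]) i k := Relation.reflTransGen_iff_eq_or_transGen.1 hrt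
    rcases hbBaseW_cases hedge with ⟨b, c, hkn, hb, hc, hproc⟩ | ⟨hkn, p, q, m, hs, hr⟩
    · left
      have hkw : k < w.length := hkn
      rw [getElem?_append_lt _ hkw] at hb
      rw [List.getElem?_concat_length] at hc
      obtain rfl : a = c := Option.some_injective _ hc
      refine ⟨k, b, ?_, hb, hproc⟩
      rcases hor with rfl | hW
      · right; rfl
      · left; exact hbW_restrict hW hkw
    · right
      have hkw : k < w.length := by omega
      rw [getElem?_append_lt _ hkw] at hs
      rw [List.getElem?_concat_length] at hr
      obtain rfl : a = Act.rcv p q m := Option.some_injective _ hr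
      have hk1 : k = w.length - 1 := by omega
      refine ⟨p, q, m, rfl, ?_, ?_⟩
      · rw [getLast?_getElem?, ← hk1]; exact hs
      · rcases hor with rfl | hW
        · right; omega
        · left
          rw [← hk1]
          exact hbW_restrict hW hkw
  · have hconcat : (w ++ [a])[w.length]? = some a := List.getElem?_concat_length
    rintro (⟨k, b, hor, hb, hproc⟩ | ⟨p, q, m, rfl, hlast, hor⟩)
    · have hkw : k < w.length := act?_lt hb
      have hedge : hbBaseW (w ++ [a]) k w.length :=
        hbBaseW.proc hkw (by rw [getElem?_append_lt _ hkw]; exact hb) hconcat hproc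
      rcases hor with hW | rfl
      · exact Relation.TransGen.tail (hbW_mono hW) hedge
      · exact Relation.TransGen.single hedge
    · rw [getLast?_getElem?] at hlast
      have hpos : 0 < w.length := by
        rcases Nat.eq_zero_or_pos w.length with h0 | h0
        · exfalso
          have : w = [] := List.length_eq_zero_iff.1 h0
          rw [this] at hlast
          simp at hlast
        · exact h0
      have hn1 : w.length - 1 + 1 = w.length := by omega
      have hedge : hbBaseW (w ++ [Act.rcv p q m]) (w.length - 1) w.length := by
        have hlift : (w ++ [Act.rcv p q m])[w.length - 1]? = some (Act.snd p q m) := by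
          rw [getElem?_append_lt _ (by omega)]; exact hlast
        have hr2 : (w ++ [Act.rcv p q m])[(w.length - 1) + 1]? = some (Act.rcv p q m) := by
          rw [hn1]; exact hconcat
        have := hbBaseW.msg hlift hr2
        rwa [hn1] at this
      rcases hor with hW | rfl
      · exact Relation.TransGen.tail (hbW_mono hW) hedge
      · exact Relation.TransGen.single hedge

theorem badC_append {w : List (Act P M)} {a : Act P M} :
    BadC (w ++ [a]) ↔ BadC w
      ∨ ∃ p q m, w.getLast? = some (Act.snd p q m) ∧ a = Act.rcv p q m
          ∧ ∃ s1 j, srcAt w q s1 ∧ j + 1 = w.length ∧ hbW w s1 j := by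
  constructor
  · rintro ⟨q, p1, p2, s1, s2, m1, m2, hhb, h1, hn1, h2, hm2⟩
    have hlt : s1 < s2 := hbW_lt hhb
    have hs2 : s2 + 1 < w.length + 1 := by
      have := act?_lt hm2; simpa using this
    rcases Nat.lt_trichotomy (s2 + 1) w.length with hc | hc | hc
    · left
      rw [getElem?_append_lt _ (by omega)] at h1 h2
      rw [getElem?_append_lt _ (by omega)] at hn1 hm2
      exact ⟨q, p1, p2, s1, s2, m1, m2, hbW_restrict hhb (by omega), h1, hn1, h2, hm2⟩
    · right
      rw [getElem?_append_lt _ (by omega)] at h1 h2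
      rw [getElem?_append_lt _ (by omega)] at hn1
      rw [hc, List.getElem?_concat_length] at hm2
      refine ⟨p2, q, m2, ?_, (Option.some_injective _ hm2), s1, s2, ⟨p1, m1, h1, by omega, hn1⟩,
        by omega, hbW_restrict hhb (by omega)⟩
      rw [getLast?_getElem?, show w.length - 1 = s2 by omega]
      exact h2
    · omega
  · rintro (⟨q, p1, p2, s1, s2, m1, m2, hhb, h1, hn1, h2, hm2⟩ |
      ⟨p, q, m, hlast, ha, s1, j, ⟨p1, m1, h1, hlt1, hn1⟩, hj1, hbw⟩)
    · have hs2 : s2 + 1 < w.length := act?_lt hm2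
      have hlt : s1 < s2 := hbW_lt hhb
      refine ⟨q, p1, p2, s1, s2, m1, m2, hbW_mono hhb, ?_, ?_, ?_, ?_⟩
      · rw [getElem?_append_lt _ (by omega)]; exact h1
      · rw [getElem?_append_lt _ (by omega)]; exact hn1
      · rw [getElem?_append_lt _ (by omega)]; exact h2
      · rw [getElem?_append_lt _ (by omega)]; exact hm2
    · rw [getLast?_getElem?] at hlast
      refine ⟨q, p1, p, s1, j, m1, m, hbW_mono hbw, ?_, ?_, ?_, ?_⟩
      · rw [getElem?_append_lt _ (by omega)]; exact h1
      · rw [getElem?_append_lt _ (by omega)]; exact hn1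
      · rw [getElem?_append_lt _ (by omega), show j = w.length - 1 by omega]; exact hlast
      · rw [show j + 1 = w.length by omega, List.getElem?_concat_length, ha]

/-! ### the automaton -/

def actEquiv (P M : Type) : Act P M ≃ (Bool × P × P × M) where
  toFun a := match a with
    | .snd p q m => (true, p, q, m)
    | .rcv p q m => (false, p, q, m)
  invFun x := if x.1 then Act.snd x.2.1 x.2.2.1 x.2.2.2 else Act.rcv x.2.1 x.2.2.1 x.2.2.2
  left_inv := by rintro (⟨p, q, m⟩ | ⟨p, q, m⟩) <;> rfl
  right_inv := by rintro ⟨b, p, q, m⟩; cases b <;> rfl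

instance [Fintype P] [Fintype M] : Fintype (Act P M) :=
  Fintype.ofEquiv _ (actEquiv P M).symm

structure St (P M : Type) where
  valid : Bool
  last : Option (Act P M)
  smat : Bool
  unm : P → P → Bool
  badP : Bool
  ltaint : P → Bool
  taint : P → P → Bool
  badC : Bool

instance stFintype [Fintype P] [DecidableEq P] [Fintype M] [DecidableEq M] :
    Fintype (St P M) := by
  classical
  exact Fintype.ofEquiv
    (Bool × Option (Act P M) × Bool × (P → P → Bool) × Bool × (P → Bool) × (P → P → Bool) × Bool)
    { toFun := fun x => ⟨x.1, x.2.1, x.2.2.1, x.2.2.2.1, x.2.2.2.2.1, x.2.2.2.2.2.1,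
        x.2.2.2.2.2.2.1, x.2.2.2.2.2.2.2⟩,
      invFun := fun s => (s.valid, s.last, s.smat, s.unm, s.badP, s.ltaint, s.taint, s.badC),
      left_inv := fun _ => rfl,
      right_inv := fun _ => rfl }

variable [DecidableEq M]

def validB (l : Option (Act P M)) (a : Act P M) : Bool :=
  match a with
  | Act.rcv p q m => decide (l = some (Act.snd p q m))
  | _ => true

theorem validB_iff {l : Option (Act P M)} {a : Act P M} :
    validB l a = true ↔ ∀ p q m, a = Act.rcv p q m → l = some (Act.snd p q m) := by
  cases a <;> simp [validB]

def smatB (l : Option (Act P M)) (a : Act P M) : Bool :=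
  match l with
  | some (Act.snd p q m) => decide (a = Act.rcv p q m)
  | _ => true

theorem smatB_iff {l : Option (Act P M)} {a : Act P M} :
    smatB l a = true ↔ ∀ p q m, l = some (Act.snd p q m) → a = Act.rcv p q m := by
  rcases l with _ | al
  · simp [smatB]
  · cases al <;> simp [smatB]

def unmB (l : Option (Act P M)) (a : Act P M) (p q : P) : Bool :=
  match l with
  | some (Act.snd p' q' m') =>
      decide (p = p') && decide (q = q') && !decide (a = Act.rcv p' q' m')
  | _ => false

theorem unmB_iff {l : Option (Act P M)} {a : Act P M} {p q : P} :
    unmB l a p q = true ↔ ∃ m, l = some (Act.snd p q m) ∧ a ≠ Act.rcv p q m := by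
  rcases l with _ | al
  · simp [unmB]
  · cases al with
    | snd p' q' m' =>
      simp only [unmB, Bool.and_eq_true, Bool.not_eq_true', decide_eq_true_eq,
        decide_eq_false_iff_not]
      constructor
      · rintro ⟨⟨rfl, rfl⟩, h⟩
        exact ⟨m', rfl, h⟩
      · rintro ⟨m, hm, h⟩
        injection Option.some_injective _ hm with h1 h2 h3
        subst h1; subst h2; subst h3
        exact ⟨⟨rfl, rfl⟩, h⟩
    | rcv p' q' m' => simp [unmB]

def badPB (l : Option (Act P M)) (a : Act P M) (u : P → P → Bool) : Bool :=
  match l with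
  | some (Act.snd p' q' m') => decide (a = Act.rcv p' q' m') && u p' q'
  | _ => false

theorem badPB_iff {l : Option (Act P M)} {a : Act P M} {u : P → P → Bool} :
    badPB l a u = true
      ↔ ∃ p q m, l = some (Act.snd p q m) ∧ a = Act.rcv p q m ∧ u p q = true := by
  rcases l with _ | al
  · simp [badPB]
  · cases al with
    | snd p' q' m' =>
      simp only [badPB, Bool.and_eq_true, decide_eq_true_eq]
      constructor
      · rintro ⟨rfl, h⟩
        exact ⟨p', q', m', rfl, rfl, h⟩
      · rintro ⟨p, q, m, hm, rfl, h⟩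
        injection Option.some_injective _ hm with h1 h2 h3
        subst h1; subst h2; subst h3
        exact ⟨rfl, h⟩
    | rcv p' q' m' => simp [badPB]

def badCB (l : Option (Act P M)) (a : Act P M) (lt : P → Bool) : Bool :=
  match l with
  | some (Act.snd p' q' m') => decide (a = Act.rcv p' q' m') && lt q'
  | _ => false

theorem badCB_iff {l : Option (Act P M)} {a : Act P M} {lt : P → Bool} :
    badCB l a lt = true
      ↔ ∃ p q m, l = some (Act.snd p q m) ∧ a = Act.rcv p q m ∧ lt q = true := by
  rcases l with _ | al
  · simp [badCB]
  · cases al with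
    | snd p' q' m' =>
      simp only [badCB, Bool.and_eq_true, decide_eq_true_eq]
      constructor
      · rintro ⟨rfl, h⟩
        exact ⟨p', q', m', rfl, rfl, h⟩
      · rintro ⟨p, q, m, hm, rfl, h⟩
        injection Option.some_injective _ hm with h1 h2 h3
        subst h1; subst h2; subst h3
        exact ⟨rfl, h⟩
    | rcv p' q' m' => simp [badCB]

def srcPB (l : Option (Act P M)) (a : Act P M) (q r : P) : Bool :=
  match l with
  | some (Act.snd p' q' m') =>
      decide (q = q') && !decide (a = Act.rcv p' q' m') && decide (r = p')
  | _ => false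

theorem srcPB_iff {l : Option (Act P M)} {a : Act P M} {q r : P} :
    srcPB l a q r = true
      ↔ ∃ p' m', l = some (Act.snd p' q m') ∧ a ≠ Act.rcv p' q m' ∧ r = p' := by
  rcases l with _ | al
  · simp [srcPB]
  · cases al with
    | snd p' q' m' =>
      simp only [srcPB, Bool.and_eq_true, Bool.not_eq_true', decide_eq_true_eq,
        decide_eq_false_iff_not]
      constructor
      · rintro ⟨⟨h1, h⟩, h2⟩
        subst h1; subst h2
        exact ⟨_, m', rfl, h, rfl⟩
      · rintro ⟨p'', m'', hm, h, rfl⟩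
        injection Option.some_injective _ hm with h1 h2 h3
        subst h1; subst h2; subst h3
        exact ⟨⟨rfl, h⟩, rfl⟩
    | rcv p' q' m' => simp [srcPB]

def isRB (a : Act P M) : Bool := match a with | Act.rcv _ _ _ => true | _ => false

theorem isRB_iff {a : Act P M} : isRB a = true ↔ ∃ p q m, a = Act.rcv p q m := by
  cases a <;> simp [isRB]

def upd (s : St P M) (a : Act P M) : St P M :=
  { valid := s.valid && validB s.last a,
    last := some a,
    smat := s.smat && smatB s.last a,
    unm := fun p q => s.unm p q || unmB s.last a p q,
    badP := s.badP || badPB s.last a s.unm,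
    ltaint := fun q => s.taint q a.proc || (isRB a && s.ltaint q) || srcPB s.last a q a.proc,
    taint := fun q r => s.taint q r
      || (decide (r = a.proc) && (s.taint q a.proc || (isRB a && s.ltaint q)
            || srcPB s.last a q a.proc))
      || srcPB s.last a q r,
    badC := s.badC || badCB s.last a s.ltaint }

def stInit : St P M :=
  ⟨true, none, true, fun _ _ => false, false, fun _ => false, fun _ _ => false, false⟩

def StInv (w : List (Act P M)) (s : St P M) : Prop :=
  s.last = w.getLast?
  ∧ (s.valid = true ↔ ValidRSC w)
  ∧ (s.smat = true ↔ Qs w)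
  ∧ (∀ p q, s.unm p q = true ↔ UnmS w p q)
  ∧ (s.badP = true ↔ BadP w)
  ∧ (ValidRSC w → ∀ q, (s.ltaint q = true
      ↔ ∃ s1 j, srcAt w q s1 ∧ j + 1 = w.length ∧ hbW w s1 j))
  ∧ (ValidRSC w → ∀ q r, (s.taint q r = true
      ↔ ∃ s1 j b, srcAt w q s1 ∧ w[j]? = some b ∧ b.proc = r ∧ (hbW w s1 j ∨ s1 = j)))
  ∧ (ValidRSC w → (s.badC = true ↔ BadC w))

theorem length_pos_of_getLast? {w : List (Act P M)} {x : Act P M}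
    (h : w.getLast? = some x) : 0 < w.length := by
  rcases Nat.eq_zero_or_pos w.length with h0 | h0
  · exfalso
    have : w = [] := List.length_eq_zero_iff.1 h0
    rw [this] at h
    simp at h
  · exact h0

theorem upd_ltaint_iff {w : List (Act P M)} {s : St P M} {a : Act P M}
    (hInv : StInv w s) (hv : ValidRSC (w ++ [a])) (q : P) :
    (upd s a).ltaint q = true
      ↔ ∃ s1, srcAt (w ++ [a]) q s1 ∧ hbW (w ++ [a]) s1 w.length := by
  obtain ⟨hlast, hvalid, hsmat, hunm, hbadP, hltaint, htaint, hbadC⟩ := hInv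
  obtain ⟨hvw, hva⟩ := valid_append.1 hv
  have I1 := hltaint hvw
  have I2 := htaint hvw
  show (s.taint q a.proc || (isRB a && s.ltaint q) || srcPB s.last a q a.proc) = true ↔ _
  simp only [Bool.or_eq_true, Bool.and_eq_true]
  constructor
  · rintro ((ht | ⟨hr, hl⟩) | hs)
    · obtain ⟨s1, k, b, hsrc, hbk, hbproc, hor⟩ := (I2 q a.proc).1 ht
      exact ⟨s1, srcAt_append.2 (Or.inl hsrc),
        hbW_snoc_last.2 (Or.inl ⟨k, b, hor, hbk, hbproc⟩)⟩
    · obtain ⟨p0, q0, m0, ha0⟩ := isRB_iff.1 hr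
      have hlastw := hva p0 q0 m0 ha0
      obtain ⟨s1, j, hsrc, hj1, hbw⟩ := (I1 q).1 hl
      refine ⟨s1, srcAt_append.2 (Or.inl hsrc),
        hbW_snoc_last.2 (Or.inr ⟨p0, q0, m0, ha0, hlastw, Or.inl ?_⟩)⟩
      rw [show w.length - 1 = j by omega]
      exact hbw
    · obtain ⟨p', m', hsl, hne, hproc⟩ := srcPB_iff.1 hs
      rw [hlast] at hsl
      have hpos := length_pos_of_getLast? hsl
      refine ⟨w.length - 1, srcAt_append.2 (Or.inr ⟨by omega, p', m', hsl, hne⟩),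
        hbW_snoc_last.2 (Or.inl ⟨w.length - 1, Act.snd p' q m', Or.inr rfl,
          getLast?_getElem?.1 hsl, hproc.symm⟩)⟩
  · rintro ⟨s1, hsrc, hbw⟩
    rcases hbW_snoc_last.1 hbw with ⟨k, b, hork, hbk, hbproc⟩ |
      ⟨p0, q0, m0, ha0, hlastw, hor1⟩
    · rcases srcAt_append.1 hsrc with hold | ⟨hs1n, pS, mS, hlw, hne⟩
      · exact Or.inl (Or.inl ((I2 q a.proc).2 ⟨s1, k, b, hold, hbk, hbproc, hork⟩))
      · have hkw : k < w.length := act?_lt hbk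
        rcases hork with hW | rfl
        · have := hbW_lt hW
          omega
        · have hb' : b = Act.snd pS q mS := by
            have := getLast?_getElem?.1 hlw
            rw [show w.length - 1 = s1 by omega] at this
            exact Option.some_injective _ (hbk.symm.trans this)
          right
          apply srcPB_iff.2
          refine ⟨pS, mS, by rw [hlast]; exact hlw, hne, ?_⟩
          rw [← hbproc, hb']
          rfl
    · rcases srcAt_append.1 hsrc with hold | ⟨hs1n, pS, mS, hlw, hne⟩
      · have hpos := length_pos_of_getLast? hlastw
        rcases hor1 with hW | rfl
        · refine Or.inl (Or.inr ⟨isRB_iff.2 ⟨p0, q0, m0, ha0⟩, (I1 q).2 ?_⟩)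
          exact ⟨s1, w.length - 1, hold, by omega, hW⟩
        · obtain ⟨pp, mm, _, hbound, _⟩ := hold
          omega
      · exfalso
        injection Option.some_injective _ (hlw.symm.trans hlastw) with e1 e2 e3
        apply hne
        rw [ha0, e1, e2, e3]

theorem upd_taint_iff {w : List (Act P M)} {s : St P M} {a : Act P M}
    (hInv : StInv w s) (hv : ValidRSC (w ++ [a])) (q r : P) :
    (upd s a).taint q r = true
      ↔ ∃ s1 j b, srcAt (w ++ [a]) q s1 ∧ (w ++ [a])[j]? = some b ∧ b.proc = r
          ∧ (hbW (w ++ [a]) s1 j ∨ s1 = j) := by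
  have hlt' := upd_ltaint_iff hInv hv
  obtain ⟨hlast, hvalid, hsmat, hunm, hbadP, hltaint, htaint, hbadC⟩ := hInv
  obtain ⟨hvw, hva⟩ := valid_append.1 hv
  have I2 := htaint hvw
  have hconcat : (w ++ [a])[w.length]? = some a := List.getElem?_concat_length
  show (s.taint q r || (decide (r = a.proc) && _) || srcPB s.last a q r) = true ↔ _
  simp only [Bool.or_eq_true, Bool.and_eq_true, decide_eq_true_eq]
  constructor
  · rintro ((ht | ⟨hra, hl⟩) | hs)
    · obtain ⟨s1, j, b, hsrc, hbj, hbproc, hor⟩ := (I2 q r).1 ht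
      have hjw : j < w.length := act?_lt hbj
      refine ⟨s1, j, b, srcAt_append.2 (Or.inl hsrc), ?_, hbproc, ?_⟩
      · rw [getElem?_append_lt _ hjw]; exact hbj
      · rcases hor with hW | rfl
        · exact Or.inl (hbW_mono hW)
        · exact Or.inr rfl
    · obtain ⟨s1, hsrc, hbw⟩ := (hlt' q).1
        (by simp only [upd, Bool.or_eq_true, Bool.and_eq_true]; exact hl)
      exact ⟨s1, w.length, a, hsrc, hconcat, hra.symm, Or.inl hbw⟩
    · obtain ⟨p', m', hsl, hne, hrp⟩ := srcPB_iff.1 hs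
      rw [hlast] at hsl
      have hpos := length_pos_of_getLast? hsl
      refine ⟨w.length - 1, w.length - 1, Act.snd p' q m',
        srcAt_append.2 (Or.inr ⟨by omega, p', m', hsl, hne⟩), ?_, hrp.symm, Or.inr rfl⟩
      rw [getElem?_append_lt _ (by omega)]
      exact getLast?_getElem?.1 hsl
  · rintro ⟨s1, j, b, hsrc, hbj, hbproc, hor⟩
    have hjn : j < w.length + 1 := by
      have := act?_lt hbj; simpa using this
    rcases Nat.lt_trichotomy j w.length with hj | hj | hj
    · rw [getElem?_append_lt _ hj] at hbj
      rcases srcAt_append.1 hsrc with hold | ⟨hs1n, pS, mS, hlw, hne⟩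
      · refine Or.inl (Or.inl ((I2 q r).2 ⟨s1, j, b, hold, hbj, hbproc, ?_⟩))
        rcases hor with hW | rfl
        · exact Or.inl (hbW_restrict hW hj)
        · exact Or.inr rfl
      · rcases hor with hW | rfl
        · have h1 := hbW_lt (hbW_restrict hW hj)
          omega
        · have hb' : b = Act.snd pS q mS := by
            have := getLast?_getElem?.1 hlw
            rw [show w.length - 1 = s1 by omega] at this
            exact Option.some_injective _ (hbj.symm.trans this)
          right
          apply srcPB_iff.2
          refine ⟨pS, mS, by rw [hlast]; exact hlw, hne, ?_⟩
          rw [← hbproc, hb']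
          rfl
    · subst hj
      have hba : b = a := Option.some_injective _ (hbj.symm.trans hconcat)
      subst hba
      rcases hor with hW | rfl
      · refine Or.inl (Or.inr ⟨hbproc.symm, ?_⟩)
        have hb2 := (hlt' q).2 ⟨s1, hsrc, hW⟩
        simp only [upd, Bool.or_eq_true, Bool.and_eq_true] at hb2
        exact hb2
      · obtain ⟨pp, mm, _, hbound, _⟩ := hsrc
        simp at hbound
    · omega

theorem stInv_step {w : List (Act P M)} {s : St P M} (h : StInv w s) (a : Act P M) :
    StInv (w ++ [a]) (upd s a) := by
  have hInv := h
  obtain ⟨hlast, hvalid, hsmat, hunm, hbadP, hltaint, htaint, hbadC⟩ := h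
  refine ⟨?_, ?_, ?_, ?_, ?_, ?_, ?_, ?_⟩
  · show some a = (w ++ [a]).getLast?
    rw [List.getLast?_concat]
  · show (s.valid && validB s.last a) = true ↔ _
    rw [Bool.and_eq_true, hvalid, validB_iff, hlast, valid_append]
  · show (s.smat && smatB s.last a) = true ↔ _
    rw [Bool.and_eq_true, hsmat, smatB_iff, hlast, qs_append]
  · intro p q
    show (s.unm p q || unmB s.last a p q) = true ↔ _
    rw [Bool.or_eq_true, hunm, unmB_iff, hlast, unmS_append]
  · show (s.badP || badPB s.last a s.unm) = true ↔ _
    rw [Bool.or_eq_true, hbadP, badPB_iff, hlast, badP_append]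
    constructor
    · rintro (hb | ⟨p, q, m, hm, ha, hu⟩)
      · exact Or.inl hb
      · exact Or.inr ⟨p, q, m, hm, ha, (hunm p q).1 hu⟩
    · rintro (hb | ⟨p, q, m, hm, ha, hu⟩)
      · exact Or.inl hb
      · exact Or.inr ⟨p, q, m, hm, ha, (hunm p q).2 hu⟩
  · intro hv q
    rw [upd_ltaint_iff hInv hv q]
    constructor
    · rintro ⟨s1, hsrc, hbw⟩
      exact ⟨s1, w.length, hsrc, by simp, hbw⟩
    · rintro ⟨s1, j, hsrc, hj1, hbw⟩
      have hj : j = w.length := by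
        have : (w ++ [a]).length = w.length + 1 := by simp
        omega
      subst hj
      exact ⟨s1, hsrc, hbw⟩
  · intro hv q r
    exact upd_taint_iff hInv hv q r
  · intro hv
    obtain ⟨hvw, hva⟩ := valid_append.1 hv
    have I1 := hltaint hvw
    show (s.badC || badCB s.last a s.ltaint) = true ↔ _
    rw [Bool.or_eq_true, hbadC hvw, badCB_iff, hlast, badC_append]
    constructor
    · rintro (hb | ⟨p, q, m, hm, ha, hl⟩)
      · exact Or.inl hb
      · exact Or.inr ⟨p, q, m, hm, ha, (I1 q).1 hl⟩
    · rintro (hb | ⟨p, q, m, hm, ha, hl⟩)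
      · exact Or.inl hb
      · exact Or.inr ⟨p, q, m, hm, ha, (I1 q).2 hl⟩

theorem stInv_foldl (w : List (Act P M)) : StInv w (w.foldl upd stInit) := by
  induction w using List.reverseRecOn with
  | nil =>
    refine ⟨rfl, ?_, ?_, ?_, ?_, ?_, ?_, ?_⟩
    · simp only [stInit]
      constructor
      · intro _ i p q m hi
        simp at hi
      · intro _; rfl
    · simp only [stInit]
      constructor
      · intro _ i p q m hi
        simp
      · intro _; rfl
    · intro p q
      simp only [stInit]
      constructor
      · intro hc; simp at hc
      · rintro ⟨s1, m, hs, -, -⟩; simp at hs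
    · simp only [stInit]
      constructor
      · intro hc; simp at hc
      · rintro ⟨p, q, s1, s2, m1, m2, -, hs, -, -, -⟩; simp at hs
    · intro _ q
      simp only [stInit]
      constructor
      · intro hc; simp at hc
      · rintro ⟨s1, j, ⟨p, m, hs, -, -⟩, -, -⟩; simp at hs
    · intro _ q r
      simp only [stInit]
      constructor
      · intro hc; simp at hc
      · rintro ⟨s1, j, b, ⟨p, m, hs, -, -⟩, -, -⟩; simp at hs
    · intro _
      simp only [stInit]
      constructor
      · intro hc; simp at hc
      · rintro ⟨q, p1, p2, s1, s2, m1, m2, -, hs, -, -, -⟩; simp at hs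
  | append_singleton w a ih =>
    rw [List.foldl_append]
    exact stInv_step ih a

/-! ### deterministic NFA wrapper -/

def detNFA {A σ : Type} (f : σ → A → σ) (s0 : σ) (acc : Set σ) : NFA A σ where
  step s a := {f s a}
  start := {s0}
  accept := acc

theorem detNFA_accepts {A σ : Type} (f : σ → A → σ) (s0 : σ) (acc : Set σ)
    (w : List A) : w ∈ (detNFA f s0 acc).accepts ↔ w.foldl f s0 ∈ acc := by
  have heval : ∀ v : List A, (detNFA f s0 acc).evalFrom {s0} v = {v.foldl f s0} := by
    intro v
    induction v using List.reverseRecOn with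
    | nil => rfl
    | append_singleton v a ih =>
      show List.foldl _ _ (v ++ [a]) = _
      rw [List.foldl_append]
      have : List.foldl (detNFA f s0 acc).stepSet {s0} v = {v.foldl f s0} := ih
      rw [this, List.foldl_append]
      show (detNFA f s0 acc).stepSet {v.foldl f s0} a = _
      unfold NFA.stepSet
      simp [detNFA]
  show (∃ S ∈ acc, S ∈ (detNFA f s0 acc).eval w) ↔ _
  have : (detNFA f s0 acc).eval w = {w.foldl f s0} := heval w
  rw [this]
  constructor
  · rintro ⟨S, hS, hmem⟩
    rw [Set.mem_singleton_iff] at hmem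
    rw [← hmem]; exact hS
  · intro h
    exact ⟨_, h, rfl⟩

/-! ### acceptance conditions -/

theorem allM_iff {w : List (Act P M)} :
    AllM w ↔ Qs w ∧ ∀ p q m, w.getLast? ≠ some (Act.snd p q m) := by
  constructor
  · intro hA
    constructor
    · intro i p q m _ hi
      exact hA i p q m hi
    · intro p q m hl
      have hpos := length_pos_of_getLast? hl
      rw [getLast?_getElem?] at hl
      have := hA (w.length - 1) p q m hl
      rw [show w.length - 1 + 1 = w.length by omega] at this
      rw [List.getElem?_eq_none (le_refl _)] at this
      exact absurd this (by simp)
  · rintro ⟨hQ, hl⟩ i p q m hi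
    have hlt : i < w.length := act?_lt hi
    rcases Nat.lt_trichotomy (i + 1) w.length with hc | hc | hc
    · exact hQ i p q m hc hi
    · exfalso
      apply hl p q m
      rw [getLast?_getElem?, show w.length - 1 = i by omega]
      exact hi
    · omega

end S17

section final

open S17

/-- the communication models `bag`, `p2p`, `causal` and `synch` are RegSC. -/
theorem stmt17 (P Mg : Type) [Fintype P] [DecidableEq P] [Fintype Mg] [DecidableEq Mg] :
    RegSCmodel (bag : Set (Exec P Mg)) ∧ RegSCmodel (p2p : Set (Exec P Mg)) ∧
    RegSCmodel (causal : Set (Exec P Mg)) ∧ RegSCmodel (synch : Set (Exec P Mg)) := by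
  refine ⟨?_, ?_, ?_, ?_⟩
  · refine ⟨St P Mg, stFintype, detNFA upd stInit {s | s.valid = true}, ?_⟩
    intro w
    rw [detNFA_accepts]
    have hInv := stInv_foldl (P := P) (M := Mg) w
    show (w.foldl upd stInit).valid = true ↔ _
    rw [hInv.2.1]
    exact sem_bag w
  · refine ⟨St P Mg, stFintype, detNFA upd stInit
      {s | s.valid = true ∧ s.badP = false}, ?_⟩
    intro w
    rw [detNFA_accepts]
    have hInv := stInv_foldl (P := P) (M := Mg) w
    show ((w.foldl upd stInit).valid = true ∧ (w.foldl upd stInit).badP = false) ↔ _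
    rw [← sem_p2p w, hInv.2.1]
    have : (w.foldl upd stInit).badP = false ↔ ¬ BadP w := by
      rw [← hInv.2.2.2.2.1]
      cases (w.foldl upd stInit).badP <;> simp
    rw [this]
  · refine ⟨St P Mg, stFintype, detNFA upd stInit
      {s | s.valid = true ∧ s.badC = false}, ?_⟩
    intro w
    rw [detNFA_accepts]
    have hInv := stInv_foldl (P := P) (M := Mg) w
    show ((w.foldl upd stInit).valid = true ∧ (w.foldl upd stInit).badC = false) ↔ _
    rw [← sem_causal w, hInv.2.1]
    constructor
    · rintro ⟨hv, hb⟩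
      refine ⟨hv, ?_⟩
      intro hB
      rw [(hInv.2.2.2.2.2.2.2 hv).2 hB] at hb
      exact absurd hb (by simp)
    · rintro ⟨hv, hb⟩
      refine ⟨hv, ?_⟩
      by_contra hc
      have : (w.foldl upd stInit).badC = true := by
        cases h : (w.foldl upd stInit).badC
        · exact absurd h hc
        · rfl
      exact hb ((hInv.2.2.2.2.2.2.2 hv).1 this)
  · refine ⟨St P Mg, stFintype, detNFA upd stInit
      {s | s.valid = true ∧ s.smat = true
        ∧ ∀ p q m, s.last ≠ some (Act.snd p q m)}, ?_⟩
    intro w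
    rw [detNFA_accepts]
    have hInv := stInv_foldl (P := P) (M := Mg) w
    show ((w.foldl upd stInit).valid = true ∧ (w.foldl upd stInit).smat = true
      ∧ ∀ p q m, (w.foldl upd stInit).last ≠ some (Act.snd p q m)) ↔ _
    rw [← sem_synch w, hInv.2.1, hInv.2.2.1, hInv.1, allM_iff]

end final
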